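/- arXiv:1206.3591 — 5 statements merged into one kernel-verified Lean document; each statement's English description precedes it below -/
import Mathlib

section
/- For all n ≥ 2 and all k, the number of partitions of the vertex set of the n-cycle into k non-empty independent sets equals Σ_{i≥0} (-1)^i S(n-1-i, k-1), where S(·,·) denotes the Stirling numbers of the second kind (interpreting C_2 as a single edge). -/
open Finset SimpleGraph Polynomial

/-- Stirling numbers of the second kind. -/
def stirling2 : ℕ → ℕ → ℕ
  | 0, 0 => 1
  | 0, _ + 1 => 0
  | _ + 1, 0 => 0
  | n + 1, k + 1 => (k + 1) * stirling2 n (k + 1) + stirling2 n k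

/-- Bell numbers. -/
def bell (n : ℕ) : ℕ := ∑ k ∈ Finset.range (n + 1), stirling2 n k

/-- `graphStirling G k` is the number of partitions of the vertex set of `G`
into exactly `k` non-empty independent sets. -/
noncomputable def graphStirling {V : Type} [Fintype V] [DecidableEq V] (G : SimpleGraph V) (k : ℕ) : ℕ :=
  Nat.card {P : Finpartition (Finset.univ : Finset V) //
    P.parts.card = k ∧ ∀ p ∈ P.parts, ∀ u ∈ p, ∀ v ∈ p, ¬ G.Adj u v}

/-- The number of proper colorings of `G` with `x` colors
(the chromatic polynomial evaluated at `x`). -/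
noncomputable def chromaticCount {V : Type} [Fintype V] (G : SimpleGraph V) (x : ℕ) : ℕ :=
  Nat.card {f : V → Fin x // ∀ u v, G.Adj u v → f u ≠ f v}

namespace CycleAux
open Function

/-- path properness -/
def pp {α : Type} (n : ℕ) (f : Fin n → α) : Prop :=
  ∀ i j : Fin n, (j : ℕ) = (i : ℕ) + 1 → f i ≠ f j

/-- cycle closing condition -/
def cpE {α : Type} (n : ℕ) (f : Fin n → α) : Prop :=
  ∀ i j : Fin n, (i : ℕ) = 0 → (j : ℕ) = n - 1 → f i ≠ f j

noncomputable def A (n k : ℕ) : ℕ := Nat.card {f : Fin n → Fin k // Surjective f ∧ pp n f}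

noncomputable def B (n k : ℕ) : ℕ :=
  Nat.card {f : Fin n → Fin k // Surjective f ∧ (pp n f ∧ cpE n f)}

-- helper: Nat.card of sigma
lemma nat_card_sigma {β : Type} [Fintype β] (γ : β → Type) [∀ b, Finite (γ b)] :
    Nat.card (Σ b, γ b) = ∑ b, Nat.card (γ b) := by
  letI : ∀ b, Fintype (γ b) := fun b => Fintype.ofFinite _
  simp [Nat.card_eq_fintype_card, Fintype.card_sigma]

lemma card_subtype_prod {β α : Type} [Finite β] [Finite α] (r : β → α → Prop) (m : ℕ)
    (h : ∀ b, Nat.card {a // r b a} = m) :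
    Nat.card {p : β × α // r p.1 p.2} = Nat.card β * m := by
  rw [Nat.card_congr (Equiv.subtypeProdEquivSigmaSubtype r)]
  letI : Fintype β := Fintype.ofFinite β
  rw [nat_card_sigma]
  simp [h, Nat.card_eq_fintype_card, Finset.card_univ]

section Labeled

variable {V : Type} [Fintype V] [DecidableEq V]

def fib {k : ℕ} (f : V → Fin k) (c : Fin k) : Finset V :=
  Finset.univ.filter fun v => f v = c

lemma mem_fib {k : ℕ} {f : V → Fin k} {c : Fin k} {v : V} : v ∈ fib f c ↔ f v = c := by
  simp [fib]

lemma fib_inj {k : ℕ} {f : V → Fin k} (hs : Surjective f) : Function.Injective (fib f) := by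
  intro c d h
  obtain ⟨v, hv⟩ := hs c
  have h1 : v ∈ fib f c := mem_fib.2 hv
  rw [h] at h1
  exact hv.symm.trans (mem_fib.1 h1)

def toPart {k : ℕ} (f : V → Fin k) (hs : Surjective f) :
    Finpartition (Finset.univ : Finset V) where
  parts := Finset.image (fib f) Finset.univ
  supIndep := by
    rw [Finset.supIndep_iff_pairwiseDisjoint]
    rintro p hp q hq hpq
    simp only [Finset.coe_image, Set.mem_image] at hp hq
    obtain ⟨c, -, rfl⟩ := hp
    obtain ⟨d, -, rfl⟩ := hq
    have hcd : c ≠ d := fun h => hpq (by rw [h])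
    simp only [Function.onFun, id]
    rw [Finset.disjoint_left]
    intro v hv hv'
    exact hcd ((mem_fib.1 hv).symm.trans (mem_fib.1 hv'))
  sup_parts := by
    rw [Finset.eq_univ_iff_forall]
    intro v
    exact Finset.mem_sup.2
      ⟨fib f (f v), Finset.mem_image.2 ⟨f v, Finset.mem_univ _, rfl⟩, mem_fib.2 rfl⟩
  bot_notMem := by
    intro h
    simp only [Finset.bot_eq_empty, Finset.mem_image] at h
    obtain ⟨c, -, hc⟩ := h
    obtain ⟨v, hv⟩ := hs c
    have hv2 : v ∈ fib f c := mem_fib.2 hv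
    rw [hc] at hv2
    exact absurd hv2 (Finset.notMem_empty v)

variable (G : SimpleGraph V) (k : ℕ)

def toT (f : {f : V → Fin k // Surjective f ∧ ∀ u v, G.Adj u v → f u ≠ f v}) :
    {P : Finpartition (Finset.univ : Finset V) //
      P.parts.card = k ∧ ∀ p ∈ P.parts, ∀ u ∈ p, ∀ v ∈ p, ¬ G.Adj u v} :=
  ⟨toPart f.1 f.2.1,
    by rw [toPart, Finset.card_image_of_injective _ (fib_inj f.2.1), Finset.card_univ,
        Fintype.card_fin],
    by
      rintro p hp u hu v hv hadj
      obtain ⟨c, -, rfl⟩ := Finset.mem_image.1 hp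
      exact f.2.2 u v hadj ((mem_fib.1 hu).trans (mem_fib.1 hv).symm)⟩

variable {G k}

lemma parts_eq {P} (fp : {f : {f : V → Fin k // Surjective f ∧ ∀ u v, G.Adj u v → f u ≠ f v} //
    toT G k f = P}) : P.1.parts = Finset.image (fib fp.1.1) Finset.univ :=
  (congrArg (fun Q => Q.1.parts) fp.2).symm

lemma hmem {P} (fp : {f : {f : V → Fin k // Surjective f ∧ ∀ u v, G.Adj u v → f u ≠ f v} //
    toT G k f = P}) (c : Fin k) : fib fp.1.1 c ∈ P.1.parts := by
  rw [parts_eq fp]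
  exact Finset.mem_image.2 ⟨c, Finset.mem_univ _, rfl⟩

noncomputable def fiberEquiv (P : {P : Finpartition (Finset.univ : Finset V) //
    P.parts.card = k ∧ ∀ p ∈ P.parts, ∀ u ∈ p, ∀ v ∈ p, ¬ G.Adj u v}) :
    {f : {f : V → Fin k // Surjective f ∧ ∀ u v, G.Adj u v → f u ≠ f v} // toT G k f = P} ≃
      (Fin k ≃ {p // p ∈ P.1.parts}) := by
  refine Equiv.ofBijective (fun fp => Equiv.ofBijective
    (fun c => ⟨fib fp.1.1 c, hmem fp c⟩)
    ⟨fun c d h => fib_inj fp.1.2.1 (congrArg Subtype.val h), ?_⟩) ⟨?_, ?_⟩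
  · rintro ⟨p, hp⟩
    rw [parts_eq fp] at hp
    obtain ⟨c, -, rfl⟩ := Finset.mem_image.1 hp
    exact ⟨c, rfl⟩
  · intro fp gp h
    have hfib : ∀ c, fib fp.1.1 c = fib gp.1.1 c := fun c =>
      congrArg Subtype.val (congrFun (congrArg DFunLike.coe h) c)
    apply Subtype.ext
    apply Subtype.ext
    funext v
    have hv : v ∈ fib fp.1.1 (fp.1.1 v) := mem_fib.2 rfl
    rw [hfib] at hv
    exact (mem_fib.1 hv).symm
  · intro e
    set f : V → Fin k := fun v => e.symm ⟨P.1.part v, P.1.part_mem.2 (Finset.mem_univ v)⟩ with hfdef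
    have hval : ∀ v, (e (f v)).1 = P.1.part v := by
      intro v
      rw [hfdef]
      simp
    have hsurj : Surjective f := by
      intro c
      obtain ⟨v, hv⟩ := P.1.nonempty_of_mem_parts (e c).2
      refine ⟨v, ?_⟩
      have hpart : P.1.part v = (e c).1 := P.1.part_eq_of_mem (e c).2 hv
      rw [hfdef]
      simp only
      rw [show (⟨P.1.part v, P.1.part_mem.2 (Finset.mem_univ v)⟩ :
          {p // p ∈ P.1.parts}) = e c from Subtype.ext hpart]
      exact e.symm_apply_apply c
    have hproper : ∀ u v, G.Adj u v → f u ≠ f v := by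
      intro u v hadj heq
      have hpeq : P.1.part u = P.1.part v := by
        have := congrArg (fun c => (e c).1) heq
        simpa [hval] using this
      have hu : u ∈ P.1.part v := hpeq ▸ P.1.mem_part (Finset.mem_univ u)
      exact P.2.2 _ (P.1.part_mem.2 (Finset.mem_univ v)) u hu v
        (P.1.mem_part (Finset.mem_univ v)) hadj
    have hfib : ∀ c, fib f c = (e c).1 := by
      intro c
      ext v
      rw [mem_fib]
      constructor
      · intro hc
        have := hval v
        rw [hc] at this
        exact this ▸ P.1.mem_part (Finset.mem_univ v)
      · intro hv
        have hpart : P.1.part v = (e c).1 := P.1.part_eq_of_mem (e c).2 hv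
        rw [hfdef]
        simp only
        rw [show (⟨P.1.part v, P.1.part_mem.2 (Finset.mem_univ v)⟩ :
            {p // p ∈ P.1.parts}) = e c from Subtype.ext hpart]
        exact e.symm_apply_apply c
    have htoT : toT G k ⟨f, hsurj, hproper⟩ = P := by
      apply Subtype.ext
      apply Finpartition.ext
      show Finset.image (fib f) Finset.univ = P.1.parts
      ext p
      simp only [Finset.mem_image, Finset.mem_univ, true_and]
      constructor
      · rintro ⟨c, rfl⟩
        rw [hfib c]
        exact (e c).2
      · intro hp
        refine ⟨e.symm ⟨p, hp⟩, ?_⟩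
        rw [hfib, e.apply_symm_apply]
    refine ⟨⟨⟨f, hsurj, hproper⟩, htoT⟩, ?_⟩
    apply Equiv.ext
    intro c
    apply Subtype.ext
    exact hfib c

end Labeled

/-- labeled count = k! * graphStirling -/
lemma card_labeled {V : Type} [Fintype V] [DecidableEq V] (G : SimpleGraph V) (k : ℕ) :
    Nat.card {f : V → Fin k // Surjective f ∧ ∀ u v, G.Adj u v → f u ≠ f v} =
      k.factorial * graphStirling G k := by
  classical
  rw [graphStirling]
  rw [← Nat.card_congr (Equiv.sigmaFiberEquiv (toT G k))]
  letI : Fintype {P : Finpartition (Finset.univ : Finset V) //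
      P.parts.card = k ∧ ∀ p ∈ P.parts, ∀ u ∈ p, ∀ v ∈ p, ¬ G.Adj u v} := Fintype.ofFinite _
  rw [nat_card_sigma]
  have hfib : ∀ P, Nat.card {f : {f : V → Fin k // Surjective f ∧ ∀ u v, G.Adj u v → f u ≠ f v} //
      toT G k f = P} = k.factorial := by
    intro P
    rw [Nat.card_congr (fiberEquiv P), Nat.card_eq_fintype_card]
    have hcard : Fintype.card {p // p ∈ P.1.parts} = k := by
      rw [Fintype.card_coe, P.2.1]
    rw [Fintype.card_equiv (Fintype.equivFinOfCardEq hcard).symm, Fintype.card_fin]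
  simp only [hfib, Finset.sum_const, Finset.card_univ, smul_eq_mul]
  rw [Nat.card_eq_fintype_card, Nat.mul_comm]

lemma pp_succ {α : Type} {n : ℕ} (hn : 1 ≤ n) (f : Fin (n + 1) → α) :
    pp (n + 1) f ↔ pp n (f ∘ Fin.castSucc) ∧
      f (Fin.castSucc ⟨n - 1, by omega⟩) ≠ f (Fin.last n) := by
  constructor
  · intro h
    refine ⟨fun i j hj => h i.castSucc j.castSucc (by simpa using hj), ?_⟩
    exact h _ _ (by simp; omega)
  · rintro ⟨h1, h2⟩ i j hj
    rcases Nat.lt_or_ge (j : ℕ) n with hjn | hjn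
    · have hi : (i : ℕ) < n := by omega
      have e1 : Fin.castSucc ⟨(i : ℕ), hi⟩ = i := by ext; simp
      have e2 : Fin.castSucc ⟨(j : ℕ), hjn⟩ = j := by ext; simp
      have := h1 ⟨i, hi⟩ ⟨j, hjn⟩ (by simpa using hj)
      simpa [e1, e2] using this
    · have hj' : (j : ℕ) = n := by omega
      have hi' : i = Fin.castSucc ⟨n - 1, by omega⟩ := by ext; simp; omega
      have hjl : j = Fin.last n := by ext; simpa using hj'
      exact fun hf => h2 (by rw [← hi', ← hjl]; exact hf)

lemma cpE_iff {α : Type} {n : ℕ} (hn : 1 ≤ n) (f : Fin n → α) :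
    cpE n f ↔ f ⟨0, by omega⟩ ≠ f ⟨n - 1, by omega⟩ := by
  constructor
  · intro h; exact h _ _ rfl rfl
  · intro h i j hi hj
    have : i = ⟨0, by omega⟩ := by ext; simpa using hi
    have hj2 : j = ⟨n - 1, by omega⟩ := by ext; simpa using hj
    rw [this, hj2]; exact h

lemma stirling2_one (j : ℕ) : stirling2 1 j = if j = 1 then 1 else 0 := by
  match j with
  | 0 => rfl
  | 1 => simp [stirling2]
  | j + 2 => simp [stirling2]

lemma A_one (k : ℕ) : A 1 k = if k = 1 then 1 else 0 := by
  match k with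
  | 0 =>
    have : IsEmpty {f : Fin 1 → Fin 0 // Surjective f ∧ pp 1 f} :=
      ⟨fun x => (x.1 0).elim0⟩
    simp [A, Nat.card_of_isEmpty]
  | 1 =>
    have : Unique {f : Fin 1 → Fin 1 // Surjective f ∧ pp 1 f} :=
      { default := ⟨fun _ => 0, fun c => ⟨0, Subsingleton.elim _ _⟩,
          fun i j hj => by simp at hj⟩
        uniq := fun x => by
          apply Subtype.ext; funext v; exact Subsingleton.elim _ _ }
    simp [A, Nat.card_unique]
  | k + 2 =>
    have : IsEmpty {f : Fin 1 → Fin (k + 2) // Surjective f ∧ pp 1 f} := by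
      refine ⟨fun x => ?_⟩
      obtain ⟨a, ha⟩ := x.2.1 0
      obtain ⟨b, hb⟩ := x.2.1 1
      have : a = b := Subsingleton.elim _ _
      rw [this, hb] at ha
      exact absurd ha (by simp [Fin.ext_iff])
    simp [A, Nat.card_of_isEmpty]

lemma card_ne_fintype (k : ℕ) (x : Fin k) : Fintype.card {a : Fin k // a ≠ x} = k - 1 := by
  have h2 := Fintype.card_subtype_compl (fun a : Fin k => a = x)
  simpa [ne_eq, Fintype.card_subtype_eq, Fintype.card_fin] using h2

lemma card_ne (k : ℕ) (x : Fin k) : Nat.card {a : Fin k // a ≠ x} = k - 1 := by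
  rw [Nat.card_eq_fintype_card, card_ne_fintype]

/-- transport along an equiv of color sets -/
def mapEquiv {α β : Type} (e : α ≃ β) (n : ℕ) :
    {f : Fin n → α // Surjective f ∧ pp n f} ≃ {f : Fin n → β // Surjective f ∧ pp n f} where
  toFun f := ⟨e ∘ f.1, e.surjective.comp f.2.1, fun i j hj h => f.2.2 i j hj (e.injective h)⟩
  invFun f := ⟨e.symm ∘ f.1, e.symm.surjective.comp f.2.1,
    fun i j hj h => f.2.2 i j hj (e.symm.injective h)⟩
  left_inv f := by apply Subtype.ext; funext i; simp
  right_inv f := by apply Subtype.ext; funext i; simp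

def avoidEquiv {α : Type} {n : ℕ} (v : α) :
    {g : Fin n → α // (∀ i, g i ≠ v) ∧ pp n g ∧ (∀ c, c ≠ v → ∃ i, g i = c)} ≃
    {g : Fin n → {c : α // c ≠ v} // Surjective g ∧ pp n g} where
  toFun g := ⟨fun i => ⟨g.1 i, g.2.1 i⟩,
    fun c => (g.2.2.2 c.1 c.2).imp (fun _ hi => Subtype.ext hi),
    fun i j hj h => g.2.2.1 i j hj (congrArg Subtype.val h)⟩
  invFun g := ⟨fun i => (g.1 i).1, fun i => (g.1 i).2,
    fun i j hj h => g.2.2 i j hj (Subtype.ext h),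
    fun c hc => (g.2.1 ⟨c, hc⟩).imp fun _ hi => congrArg Subtype.val hi⟩
  left_inv g := by apply Subtype.ext; rfl
  right_inv g := by apply Subtype.ext; rfl

noncomputable def E1 {α : Type} {n : ℕ} (hn : 1 ≤ n) :
    {f : Fin (n + 1) → α // (Surjective f ∧ pp (n + 1) f) ∧ Surjective (f ∘ Fin.castSucc)} ≃
    {p : {g : Fin n → α // Surjective g ∧ pp n g} × α // p.2 ≠ p.1.1 ⟨n - 1, by omega⟩} := by
  refine Equiv.ofBijective
    (fun f => ⟨(⟨f.1 ∘ Fin.castSucc, f.2.2, ((pp_succ hn f.1).1 f.2.1.2).1⟩, f.1 (Fin.last n)),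
      fun h => ((pp_succ hn f.1).1 f.2.1.2).2 h.symm⟩) ⟨?_, ?_⟩
  · rintro ⟨f, hf⟩ ⟨g, hg⟩ h
    simp only [Subtype.mk.injEq, Prod.mk.injEq] at h
    apply Subtype.ext
    funext i
    induction i using Fin.lastCases with
    | last => exact h.2
    | cast i => exact congrFun h.1 i
  · rintro ⟨⟨⟨g, hgs, hgp⟩, c⟩, hc⟩
    have hres : Fin.snoc g c ∘ Fin.castSucc = g := funext fun i => Fin.snoc_castSucc _ _ _
    refine ⟨⟨Fin.snoc g c, ⟨?_, ?_⟩, ?_⟩, ?_⟩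
    · intro b
      obtain ⟨i, hi⟩ := hgs b
      exact ⟨Fin.castSucc i, by rw [Fin.snoc_castSucc]; exact hi⟩
    · rw [pp_succ hn]
      refine ⟨by rw [hres]; exact hgp, ?_⟩
      rw [Fin.snoc_castSucc, Fin.snoc_last]
      exact fun h => hc (h.symm)
    · rw [hres]; exact hgs
    · apply Subtype.ext
      simp only [Prod.mk.injEq]
      exact ⟨Subtype.ext hres, Fin.snoc_last _ _⟩

noncomputable def E2 {α : Type} {n : ℕ} (hn : 1 ≤ n) :
    {f : Fin (n + 1) → α // (Surjective f ∧ pp (n + 1) f) ∧ ¬ Surjective (f ∘ Fin.castSucc)} ≃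
    {p : α × (Fin n → α) //
      (∀ i, p.2 i ≠ p.1) ∧ pp n p.2 ∧ (∀ c, c ≠ p.1 → ∃ i, p.2 i = c)} := by
  refine Equiv.ofBijective (fun f => ⟨(f.1 (Fin.last n), f.1 ∘ Fin.castSucc), ?_, ?_, ?_⟩)
    ⟨?_, ?_⟩
  · intro i hi
    apply f.2.2
    intro c
    obtain ⟨j, hj⟩ := f.2.1.1 c
    induction j using Fin.lastCases with
    | last => exact ⟨i, hi.trans hj⟩
    | cast j => exact ⟨j, hj⟩
  · exact ((pp_succ hn f.1).1 f.2.1.2).1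
  · intro c hcne
    obtain ⟨j, hj⟩ := f.2.1.1 c
    induction j using Fin.lastCases with
    | last => exact absurd hj.symm hcne
    | cast j => exact ⟨j, hj⟩
  · rintro ⟨f, hf⟩ ⟨g, hg⟩ h
    simp only [Subtype.mk.injEq, Prod.mk.injEq] at h
    apply Subtype.ext
    funext i
    induction i using Fin.lastCases with
    | last => exact h.1
    | cast i => exact congrFun h.2 i
  · rintro ⟨⟨v, g⟩, h1, h2, h3⟩
    have hres : Fin.snoc g v ∘ Fin.castSucc = g := funext fun i => Fin.snoc_castSucc _ _ _
    refine ⟨⟨Fin.snoc g v, ⟨?_, ?_⟩, ?_⟩, ?_⟩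
    · intro c
      by_cases hcv : c = v
      · exact ⟨Fin.last n, by rw [Fin.snoc_last, hcv]⟩
      · obtain ⟨i, hi⟩ := h3 c hcv
        exact ⟨Fin.castSucc i, by rw [Fin.snoc_castSucc]; exact hi⟩
    · rw [pp_succ hn]
      refine ⟨by rw [hres]; exact h2, ?_⟩
      rw [Fin.snoc_castSucc, Fin.snoc_last]
      exact h1 _
    · rw [hres]
      intro hs
      obtain ⟨i, hi⟩ := hs v
      exact h1 i hi
    · apply Subtype.ext
      simp only [Prod.mk.injEq]
      exact ⟨Fin.snoc_last _ _, hres⟩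

lemma A_rec (n k : ℕ) (hn : 1 ≤ n) : A (n + 1) k = A n k * (k - 1) + k * A n (k - 1) := by
  classical
  have hdecomp : A (n + 1) k =
      Nat.card {f : Fin (n + 1) → Fin k //
        (Surjective f ∧ pp (n + 1) f) ∧ Surjective (f ∘ Fin.castSucc)} +
      Nat.card {f : Fin (n + 1) → Fin k //
        (Surjective f ∧ pp (n + 1) f) ∧ ¬ Surjective (f ∘ Fin.castSucc)} := by
    unfold A
    rw [← Nat.card_sum]
    apply Nat.card_congr
    exact (((Equiv.subtypeSubtypeEquivSubtypeInter _ _).symm.sumCongr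
      (Equiv.subtypeSubtypeEquivSubtypeInter _ _).symm).trans
      (Equiv.sumCompl fun x : {f : Fin (n + 1) → Fin k // Surjective f ∧ pp (n + 1) f} =>
        Surjective (x.1 ∘ Fin.castSucc))).symm
  rw [hdecomp]
  have h1 : Nat.card {f : Fin (n + 1) → Fin k //
      (Surjective f ∧ pp (n + 1) f) ∧ Surjective (f ∘ Fin.castSucc)} = A n k * (k - 1) := by
    rw [Nat.card_congr (E1 hn)]
    exact card_subtype_prod
      (fun (b : {g : Fin n → Fin k // Surjective g ∧ pp n g}) (a : Fin k) =>
        a ≠ b.1 ⟨n - 1, by omega⟩) (k - 1) (fun b => card_ne k _)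
  have h2 : Nat.card {f : Fin (n + 1) → Fin k //
      (Surjective f ∧ pp (n + 1) f) ∧ ¬ Surjective (f ∘ Fin.castSucc)} = k * A n (k - 1) := by
    rw [Nat.card_congr (E2 hn)]
    have := card_subtype_prod
      (fun (v : Fin k) (g : Fin n → Fin k) =>
        (∀ i, g i ≠ v) ∧ pp n g ∧ (∀ c, c ≠ v → ∃ i, g i = c)) (A n (k - 1)) ?_
    · rw [this, Nat.card_eq_fintype_card, Fintype.card_fin]
    · intro v
      rw [Nat.card_congr (avoidEquiv v)]
      have ev : {c : Fin k // c ≠ v} ≃ Fin (k - 1) :=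
        Fintype.equivFinOfCardEq (card_ne_fintype k v)
      exact Nat.card_congr (mapEquiv ev n)
  rw [h1, h2]

lemma stirling2_succ (n j : ℕ) :
    stirling2 (n + 1) (j + 1) = (j + 1) * stirling2 n (j + 1) + stirling2 n j := rfl

lemma stirling2_zero_right (n : ℕ) (hn : 1 ≤ n) : stirling2 n 0 = 0 := by
  match n, hn with
  | n + 1, _ => rfl

lemma A_closed (n k : ℕ) (hn : 2 ≤ n) : A n k = k.factorial * stirling2 (n - 1) (k - 1) := by
  induction n, hn using Nat.le_induction generalizing k with
  | base =>
    have h := A_rec 1 k le_rfl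
    rw [h, A_one, A_one]
    match k with
    | 0 => simp [stirling2]
    | 1 => simp [stirling2]
    | 2 => simp [stirling2_one]
    | k + 3 => simp [stirling2_one]
  | succ n hn ih =>
    obtain ⟨n', rfl⟩ : ∃ n', n = n' + 1 := ⟨n - 1, by omega⟩
    have h := A_rec (n' + 1) k (by omega)
    rw [h, ih k, ih (k - 1)]
    simp only [Nat.add_sub_cancel]
    match k with
    | 0 => simp [stirling2_zero_right (n' + 1) (by omega)]
    | 1 =>
      simp [stirling2_zero_right n' (by omega), stirling2_zero_right (n' + 1) (by omega)]
    | k + 2 =>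
      simp only [Nat.add_sub_cancel, Nat.succ_sub_succ, Nat.sub_zero]
      rw [stirling2_succ, Nat.factorial_succ (k + 1)]
      ring

noncomputable def E3 {α : Type} {m : ℕ} (hm : 2 ≤ m) :
    {f : Fin (m + 1) → α //
      (Surjective f ∧ pp (m + 1) f) ∧ f ⟨0, Nat.succ_pos m⟩ = f (Fin.last m)} ≃
    {g : Fin m → α // Surjective g ∧ (pp m g ∧ cpE m g)} := by
  have hm1 : 1 ≤ m := by omega
  have e0 : (⟨0, by omega⟩ : Fin (m + 1)) = Fin.castSucc ⟨0, by omega⟩ := by ext; simp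
  refine Equiv.ofBijective (fun f => ⟨f.1 ∘ Fin.castSucc, ?_, ?_, ?_⟩) ⟨?_, ?_⟩
  · intro c
    obtain ⟨j, hj⟩ := f.2.1.1 c
    induction j using Fin.lastCases with
    | last => exact ⟨⟨0, by omega⟩, by rw [Function.comp_apply, ← e0, f.2.2]; exact hj⟩
    | cast j => exact ⟨j, hj⟩
  · exact ((pp_succ hm1 f.1).1 f.2.1.2).1
  · rw [cpE_iff hm1]
    intro h
    apply ((pp_succ hm1 f.1).1 f.2.1.2).2
    calc f.1 (Fin.castSucc ⟨m - 1, by omega⟩) = (f.1 ∘ Fin.castSucc) ⟨m - 1, by omega⟩ := rfl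
      _ = (f.1 ∘ Fin.castSucc) ⟨0, by omega⟩ := h.symm
      _ = f.1 ⟨0, by omega⟩ := (congrArg f.1 e0).symm
      _ = f.1 (Fin.last m) := f.2.2
  · rintro ⟨f, hf⟩ ⟨g, hg⟩ h
    simp only [Subtype.mk.injEq] at h
    apply Subtype.ext
    funext i
    induction i using Fin.lastCases with
    | last =>
      have h0 : f ⟨0, by omega⟩ = g ⟨0, by omega⟩ := by
        rw [e0]; exact congrFun h ⟨0, by omega⟩
      show f (Fin.last m) = g (Fin.last m)
      rw [← hf.2, ← hg.2]; exact h0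
    | cast i => exact congrFun h i
  · rintro ⟨g, hs, hp, hc⟩
    have hres : Fin.snoc g (g ⟨0, by omega⟩) ∘ Fin.castSucc = g :=
      funext fun i => Fin.snoc_castSucc _ _ _
    refine ⟨⟨Fin.snoc g (g ⟨0, by omega⟩), ⟨?_, ?_⟩, ?_⟩, ?_⟩
    · intro c
      obtain ⟨i, hi⟩ := hs c
      exact ⟨Fin.castSucc i, by rw [Fin.snoc_castSucc]; exact hi⟩
    · rw [pp_succ hm1]
      refine ⟨by rw [hres]; exact hp, ?_⟩
      rw [Fin.snoc_castSucc, Fin.snoc_last]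
      exact fun h => ((cpE_iff hm1 g).1 hc) h.symm
    · rw [e0, Fin.snoc_castSucc, Fin.snoc_last]
    · exact Subtype.ext hres

lemma A_split (m k : ℕ) (hm : 2 ≤ m) : A (m + 1) k = B (m + 1) k + B m k := by
  classical
  have hdecomp : A (m + 1) k =
      Nat.card {f : Fin (m + 1) → Fin k //
        (Surjective f ∧ pp (m + 1) f) ∧ ¬ f ⟨0, Nat.succ_pos m⟩ = f (Fin.last m)} +
      Nat.card {f : Fin (m + 1) → Fin k //
        (Surjective f ∧ pp (m + 1) f) ∧ f ⟨0, Nat.succ_pos m⟩ = f (Fin.last m)} := by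
    unfold A
    rw [← Nat.card_sum]
    apply Nat.card_congr
    exact (((Equiv.subtypeSubtypeEquivSubtypeInter _ _).symm.sumCongr
      (Equiv.subtypeSubtypeEquivSubtypeInter _ _).symm).trans
      ((Equiv.sumComm _ _).trans
        (Equiv.sumCompl fun x : {f : Fin (m + 1) → Fin k // Surjective f ∧ pp (m + 1) f} =>
          x.1 ⟨0, Nat.succ_pos m⟩ = x.1 (Fin.last m)))).symm
  rw [hdecomp]
  congr 1
  · apply Nat.card_congr
    apply Equiv.subtypeEquivRight
    intro f
    constructor
    · rintro ⟨⟨hs, hp⟩, hne⟩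
      refine ⟨hs, hp, ?_⟩
      rw [cpE_iff (Nat.succ_le_succ (Nat.zero_le m))]
      exact hne
    · rintro ⟨hs, hp, hc⟩
      exact ⟨⟨hs, hp⟩, (cpE_iff (Nat.succ_le_succ (Nat.zero_le m)) f).1 hc⟩
  · exact Nat.card_congr (E3 hm)

lemma B_two (k : ℕ) : B 2 k = A 2 k := by
  apply Nat.card_congr
  apply Equiv.subtypeEquivRight
  intro f
  constructor
  · rintro ⟨hs, hp, _⟩; exact ⟨hs, hp⟩
  · rintro ⟨hs, hp⟩
    refine ⟨hs, hp, ?_⟩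
    intro i j hi hj
    have hi' : i = ⟨0, by omega⟩ := by ext; simpa using hi
    have hj' : j = ⟨1, by omega⟩ := by ext; simpa using hj
    rw [hi', hj']
    exact hp ⟨0, by omega⟩ ⟨1, by omega⟩ rfl

lemma sub_one_cases {n : ℕ} (hn : 2 ≤ n) (a b : ℕ) (ha : a < n) (hb : b < n)
    (h : ((n - b) + a) % n = 1) : a = b + 1 ∨ (b = n - 1 ∧ a = 0) := by
  rcases le_or_gt b a with hba | hba
  · left
    have e : (n - b) + a = (a - b) + n := by omega
    rw [e, Nat.add_mod_right, Nat.mod_eq_of_lt (by omega)] at h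
    omega
  · right
    have e : (n - b) + a < n := by omega
    rw [Nat.mod_eq_of_lt e] at h
    omega

lemma val_sub_succ {n : ℕ} (hn : 2 ≤ n) (i j : Fin n) (hj : (j : ℕ) = (i : ℕ) + 1) :
    ((j - i : Fin n) : ℕ) = 1 := by
  rw [Fin.sub_def]
  simp only
  have hi : (i : ℕ) < n := i.isLt
  have hj' : (j : ℕ) < n := j.isLt
  have e : (n - (i : ℕ)) + (j : ℕ) = 1 + n := by omega
  rw [e, Nat.add_mod_right, Nat.mod_eq_of_lt (by omega)]

lemma val_sub_wrap {n : ℕ} (hn : 2 ≤ n) (i j : Fin n) (hi : (i : ℕ) = 0)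
    (hj : (j : ℕ) = n - 1) : ((i - j : Fin n) : ℕ) = 1 := by
  rw [Fin.sub_def]
  simp only
  have e : (n - (j : ℕ)) + (i : ℕ) = 1 := by omega
  rw [e, Nat.mod_eq_of_lt (by omega)]

lemma proper_iff {α : Type} {n : ℕ} (hn : 2 ≤ n) (f : Fin n → α) :
    (∀ u v : Fin n, (cycleGraph n).Adj u v → f u ≠ f v) ↔ (pp n f ∧ cpE n f) := by
  constructor
  · intro h
    refine ⟨fun i j hj => h i j ?_, fun i j hi hj => h i j ?_⟩
    · rw [cycleGraph_adj']
      exact Or.inr (val_sub_succ hn i j hj)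
    · rw [cycleGraph_adj']
      exact Or.inl (val_sub_wrap hn i j hi hj)
  · rintro ⟨h1, h2⟩ u v hadj
    rw [cycleGraph_adj'] at hadj
    rcases hadj with h | h
    · rw [Fin.sub_def] at h
      simp only at h
      rcases sub_one_cases hn u.1 v.1 u.isLt v.isLt h with h' | ⟨h1', h2'⟩
      · exact (h1 v u h').symm
      · exact h2 u v h2' h1'
    · rw [Fin.sub_def] at h
      simp only at h
      rcases sub_one_cases hn v.1 u.1 v.isLt u.isLt h with h' | ⟨h1', h2'⟩
      · exact h1 u v h'
      · exact (h2 v u h2' h1').symm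

lemma B_cycle (n k : ℕ) (hn : 2 ≤ n) :
    B n k = k.factorial * graphStirling (cycleGraph n) k := by
  rw [← card_labeled]
  apply Nat.card_congr
  apply Equiv.subtypeEquivRight
  intro f
  exact and_congr_right fun _ => (proper_iff hn f).symm

end CycleAux

theorem cycle_graphStirling_alternating_sum (n : ℕ) (hn : 2 ≤ n) (k : ℕ) :
    (graphStirling (SimpleGraph.cycleGraph n) k : ℤ) =
      ∑ i ∈ Finset.range (n - 1), (-1 : ℤ) ^ i * (stirling2 (n - 1 - i) (k - 1) : ℤ) := by
  have key : ∀ m, 2 ≤ m → (CycleAux.B m k : ℤ) =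
      (k.factorial : ℤ) *
        ∑ i ∈ Finset.range (m - 1), (-1 : ℤ) ^ i * (stirling2 (m - 1 - i) (k - 1) : ℤ) := by
    intro m hm
    induction m, hm using Nat.le_induction with
    | base =>
      rw [CycleAux.B_two, CycleAux.A_closed 2 k le_rfl]
      simp
    | succ m hm ih =>
      obtain ⟨m', rfl⟩ : ∃ m', m = m' + 1 := ⟨m - 1, by omega⟩
      have hsplit := CycleAux.A_split (m' + 1) k hm
      have hA := CycleAux.A_closed (m' + 1 + 1) k (by omega)
      have hB : (CycleAux.B (m' + 1 + 1) k : ℤ) =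
          (CycleAux.A (m' + 1 + 1) k : ℤ) - CycleAux.B (m' + 1) k := by
        rw [hsplit]; push_cast; ring
      simp only [Nat.add_sub_cancel] at ih hA ⊢
      rw [hB, ih, hA, Finset.sum_range_succ']
      simp only [Nat.succ_sub_succ, Nat.sub_zero, pow_succ, pow_zero]
      have hneg : ∀ x ∈ Finset.range m', (-1 : ℤ) ^ x * -1 * (stirling2 (m' - x) (k - 1) : ℤ) =
          -((-1 : ℤ) ^ x * (stirling2 (m' - x) (k - 1) : ℤ)) := fun x _ => by ring
      rw [Finset.sum_congr rfl hneg, Finset.sum_neg_distrib]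
      push_cast
      ring
  have hcyc := CycleAux.B_cycle n k hn
  have hfac : (k.factorial : ℤ) ≠ 0 := by positivity
  have := key n hn
  rw [hcyc] at this
  push_cast at this
  exact mul_left_cancel₀ hfac (by linarith [this])
end

section
/- For a path P_n on n ≥ 2 vertices, the number of partitions of its vertex set into k non-empty independent sets equals S(n-1, k-1). -/
open Finset SimpleGraph Polynomial

namespace PathAux

variable {n : ℕ}

/-- number of distinct values before position `i` -/
def dc (f : Fin n → ℕ) (i : Fin n) : ℕ := ((Finset.Iio i).image f).card

def Good (f : Fin n → ℕ) : Prop := ∀ i, f i ≤ dc f i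

def AdjOK (f : Fin n → ℕ) : Prop := ∀ i j : Fin n, (i : ℕ) + 1 = (j : ℕ) → f i ≠ f j

def A (n k : ℕ) : Type := {f : Fin n → ℕ // Good f ∧ AdjOK f ∧ (Finset.univ.image f).card = k}

/-- image of `f` on positions `< m` -/
def S (f : Fin n → ℕ) (m : ℕ) : Finset ℕ :=
  (Finset.univ.filter fun j : Fin n => (j : ℕ) < m).image f

lemma Iio_image_eq (f : Fin n → ℕ) (i : Fin n) : (Finset.Iio i).image f = S f i := by
  unfold S
  congr 1
  ext j
  simp only [Finset.mem_Iio, Finset.mem_filter, Finset.mem_univ, true_and, Fin.lt_def]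

lemma S_zero (f : Fin n → ℕ) : S f 0 = ∅ := by simp [S]

lemma S_succ (f : Fin n → ℕ) {m : ℕ} (hm : m < n) :
    S f (m + 1) = insert (f ⟨m, hm⟩) (S f m) := by
  unfold S
  rw [← Finset.image_insert]
  congr 1
  ext j
  simp only [Finset.mem_insert, Finset.mem_filter, Finset.mem_univ, true_and]
  constructor
  · intro h
    rcases Nat.lt_succ_iff_lt_or_eq.mp h with h | h
    · exact Or.inr h
    · exact Or.inl (Fin.ext h)
  · rintro (rfl | h)
    · simp
    · omega

lemma S_of_le (f : Fin n → ℕ) {m : ℕ} (hm : n ≤ m) : S f m = Finset.univ.image f := by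
  unfold S
  congr 1
  ext j
  simp only [Finset.mem_filter, Finset.mem_univ, true_and, iff_true]
  exact lt_of_lt_of_le j.isLt hm

lemma prefix_closed {f : Fin n → ℕ} (hf : Good f) (m : ℕ) :
    S f m = Finset.range (S f m).card := by
  induction m with
  | zero => simp [S_zero]
  | succ m ih =>
    by_cases hm : m < n
    · rw [S_succ f hm]
      by_cases hmem : f ⟨m, hm⟩ ∈ S f m
      · rw [Finset.insert_eq_self.2 hmem]
        exact ih
      · have h1 : f ⟨m, hm⟩ ≤ (S f m).card := by
          have := hf ⟨m, hm⟩
          rwa [dc, Iio_image_eq] at this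
        have h2 : f ⟨m, hm⟩ ∉ Finset.range (S f m).card := by rw [← ih]; exact hmem
        have h3 : f ⟨m, hm⟩ = (S f m).card := by
          simp only [Finset.mem_range, not_lt] at h2; omega
        rw [Finset.card_insert_of_notMem hmem, h3, Finset.range_add_one]
        congr 1
    · rw [show S f (m+1) = S f m by
        rw [S_of_le f (by omega), S_of_le f (by omega)]]
      exact ih

lemma image_eq_range {f : Fin n → ℕ} (hf : Good f) {k : ℕ}
    (hk : (Finset.univ.image f).card = k) : Finset.univ.image f = Finset.range k := by
  have := prefix_closed hf n
  rw [S_of_le f le_rfl] at this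
  rw [this, hk]

lemma Iio_image_eq_range {f : Fin n → ℕ} (hf : Good f) (i : Fin n) :
    (Finset.Iio i).image f = Finset.range (dc f i) := by
  have h := prefix_closed hf i
  rw [dc, Iio_image_eq, h]
  congr 2

lemma val_lt_of_good {f : Fin n → ℕ} (hf : Good f) {k : ℕ}
    (hk : (Finset.univ.image f).card = k) (i : Fin n) : f i < k := by
  have : f i ∈ Finset.univ.image f := Finset.mem_image_of_mem f (Finset.mem_univ i)
  rw [image_eq_range hf hk] at this
  simpa using this

instance finiteA (n k : ℕ) : Finite (A n k) := by
  apply Finite.of_injective (fun x : A n k => fun i : Fin n => (⟨x.1 i, by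
    have := val_lt_of_good x.2.1 rfl i
    have hle : (Finset.univ.image x.1).card ≤ n := by
      apply le_trans (Finset.card_image_le)
      simp
    omega⟩ : Fin (n+1)))
  intro x y hxy
  apply Subtype.ext
  funext i
  have := congrFun hxy i
  simpa [Fin.ext_iff] using this


def Fb (f : Fin n → ℕ) (c : ℕ) : Finset (Fin n) := Finset.univ.filter fun v => f v = c

lemma Fb_nonempty {f : Fin n → ℕ} (hf : Good f) {k : ℕ}
    (hk : (Finset.univ.image f).card = k) {c : ℕ} (hc : c < k) : (Fb f c).Nonempty := by
  have : c ∈ Finset.univ.image f := by rw [image_eq_range hf hk]; simpa using hc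
  obtain ⟨v, -, hv⟩ := Finset.mem_image.mp this
  exact ⟨v, by simp [Fb, hv]⟩

lemma min_Fb_lt {f : Fin n → ℕ} (hf : Good f) {k : ℕ}
    (hk : (Finset.univ.image f).card = k) {c c' : ℕ} (hcc : c < c') (hc' : c' < k) :
    (Fb f c).min < (Fb f c').min := by
  have hne' : (Fb f c').Nonempty := Fb_nonempty hf hk hc'
  set v' := (Fb f c').min' hne' with hv'
  have hfv' : f v' = c' := by
    have := Finset.min'_mem _ hne'
    exact (Finset.mem_filter.mp this).2
  have hmin' : (Fb f c').min = (v' : WithTop (Fin n)) := (Finset.coe_min' hne').symm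
  have hdc : dc f v' = c' := by
    have h1 : c' ≤ dc f v' := hfv' ▸ hf v'
    rcases eq_or_lt_of_le h1 with h | h
    · exact h.symm
    · exfalso
      have : c' ∈ (Finset.Iio v').image f := by
        rw [Iio_image_eq_range hf]; simpa using h
      obtain ⟨j, hj, hfj⟩ := Finset.mem_image.mp this
      rw [Finset.mem_Iio] at hj
      have : v' ≤ j := Finset.min'_le _ _ (by simp [Fb, hfj])
      exact absurd hj (not_lt.mpr this)
  have : c ∈ (Finset.Iio v').image f := by
    rw [Iio_image_eq_range hf, hdc]; simpa using hcc
  obtain ⟨j, hj, hfj⟩ := Finset.mem_image.mp this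
  rw [Finset.mem_Iio] at hj
  have h1 : (Fb f c).min ≤ (j : WithTop (Fin n)) := Finset.min_le (by simp [Fb, hfj])
  have h2 : (j : WithTop (Fin n)) < ((v' : Fin n) : WithTop (Fin n)) := by
    exact_mod_cast hj
  rw [hmin']
  exact lt_of_le_of_lt h1 h2

section Partition
variable (P : Finpartition (Finset.univ : Finset (Fin n)))

def rankB (b : Finset (Fin n)) : ℕ := (P.parts.filter fun p => p.min < b.min).card

def rank (v : Fin n) : ℕ := rankB P (P.part v)

lemma min_injOn_parts {b c : Finset (Fin n)} (hb : b ∈ P.parts) (hc : c ∈ P.parts)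
    (h : b.min = c.min) : b = c := by
  have hbne : b.Nonempty := P.nonempty_of_mem_parts hb
  obtain ⟨m, hm⟩ := Finset.min_of_nonempty hbne
  have hmb : m ∈ b := Finset.mem_of_min hm
  have hmc : m ∈ c := Finset.mem_of_min (h ▸ hm)
  exact P.eq_of_mem_parts hb hc hmb hmc

lemma rankB_lt_rankB {b c : Finset (Fin n)} (hb : b ∈ P.parts) (hc : c ∈ P.parts)
    (h : b.min < c.min) : rankB P b < rankB P c := by
  apply Finset.card_lt_card
  constructor
  · intro p hp
    rw [Finset.mem_filter] at hp ⊢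
    exact ⟨hp.1, hp.2.trans h⟩
  · intro hsub
    have : b ∈ P.parts.filter fun p => p.min < c.min := Finset.mem_filter.mpr ⟨hb, h⟩
    have hb' := hsub this
    rw [Finset.mem_filter] at hb'
    exact lt_irrefl _ hb'.2

lemma rankB_lt_iff {b c : Finset (Fin n)} (hb : b ∈ P.parts) (hc : c ∈ P.parts) :
    rankB P b < rankB P c ↔ b.min < c.min := by
  constructor
  · intro h
    rcases lt_trichotomy b.min c.min with h' | h' | h'
    · exact h'
    · exact absurd (min_injOn_parts P hb hc h') (by rintro rfl; exact lt_irrefl _ h)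
    · exact absurd (rankB_lt_rankB P hc hb h') (by omega)
  · exact rankB_lt_rankB P hb hc

lemma rankB_injOn {b c : Finset (Fin n)} (hb : b ∈ P.parts) (hc : c ∈ P.parts)
    (h : rankB P b = rankB P c) : b = c := by
  rcases lt_trichotomy b.min c.min with h' | h' | h'
  · exact absurd ((rankB_lt_iff P hb hc).mpr h') (by omega)
  · exact min_injOn_parts P hb hc h'
  · exact absurd ((rankB_lt_iff P hc hb).mpr h') (by omega)

lemma part_mem' (v : Fin n) : P.part v ∈ P.parts := P.part_mem.mpr (Finset.mem_univ v)
lemma mem_part' (v : Fin n) : v ∈ P.part v := P.mem_part (Finset.mem_univ v)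

lemma rank_eq_iff {u v : Fin n} : rank P u = rank P v ↔ P.part u = P.part v :=
  ⟨fun h => rankB_injOn P (part_mem' P u) (part_mem' P v) h, fun h => by rw [rank, h, rank]⟩

lemma rank_eq_iff' {u v : Fin n} : rank P u = rank P v ↔ u ∈ P.part v := by
  rw [rank_eq_iff]
  constructor
  · intro h; rw [← h]; exact mem_part' P u
  · intro h; exact P.part_eq_of_mem (part_mem' P v) h

end Partition

section Partition
variable (P : Finpartition (Finset.univ : Finset (Fin n)))


lemma good_rank : Good (rank P) := by
  intro v
  rw [dc]
  unfold rank rankB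
  apply Finset.card_le_card_of_injOn (fun b => rankB P b)
  · intro b hb
    rw [Finset.coe_filter, Set.mem_setOf_eq] at hb
    obtain ⟨hbp, hbmin⟩ := hb
    obtain ⟨m, hm⟩ := Finset.min_of_nonempty (P.nonempty_of_mem_parts hbp)
    have hmb : m ∈ b := Finset.mem_of_min hm
    have hpm : P.part m = b := P.part_eq_of_mem hbp hmb
    have hmv : m < v := by
      have h1 : (P.part v).min ≤ (v : WithTop (Fin n)) := Finset.min_le (mem_part' P v)
      have h2 : (m : WithTop (Fin n)) < (v : WithTop (Fin n)) :=
        lt_of_lt_of_le (hm ▸ hbmin) h1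
      exact_mod_cast h2
    refine Finset.mem_image.mpr ⟨m, Finset.mem_Iio.mpr hmv, ?_⟩
    show rankB P (P.part m) = rankB P b
    rw [hpm]
  · intro b hb c hc h
    simp only [Finset.coe_filter, Set.mem_setOf_eq] at hb hc
    exact rankB_injOn P hb.1 hc.1 h

lemma adjOK_rank (hind : ∀ p ∈ P.parts, ∀ u ∈ p, ∀ v ∈ p, ¬ (pathGraph n).Adj u v) :
    AdjOK (rank P) := by
  intro i j hij h
  have hpart : P.part i = P.part j := by
    have := (rank_eq_iff' P).mp h
    exact P.part_eq_of_mem (part_mem' P j) this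
  have hadj : (pathGraph n).Adj i j := pathGraph_adj.mpr (Or.inl hij)
  exact hind (P.part j) (part_mem' P j) i (hpart ▸ mem_part' P i) j (mem_part' P j) hadj

lemma parts_eq_image_part : P.parts = Finset.univ.image P.part := by
  ext b
  constructor
  · intro hb
    obtain ⟨m, hm⟩ := P.nonempty_of_mem_parts hb
    exact Finset.mem_image.mpr ⟨m, Finset.mem_univ m, P.part_eq_of_mem hb hm⟩
  · intro hb
    obtain ⟨v, -, rfl⟩ := Finset.mem_image.mp hb
    exact part_mem' P v

lemma card_image_rank : (Finset.univ.image (rank P)).card = P.parts.card := by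
  have h1 : Finset.univ.image (rank P) = P.parts.image (rankB P) := by
    ext c
    simp only [Finset.mem_image]
    constructor
    · rintro ⟨v, -, rfl⟩
      exact ⟨P.part v, part_mem' P v, rfl⟩
    · rintro ⟨b, hb, rfl⟩
      obtain ⟨m, hm⟩ := P.nonempty_of_mem_parts hb
      exact ⟨m, Finset.mem_univ m, by rw [rank, P.part_eq_of_mem hb hm]⟩
  rw [h1]
  apply Finset.card_image_of_injOn
  intro b hb c hc h
  exact rankB_injOn P hb hc h

lemma part_eq_filter (v : Fin n) :
    P.part v = Finset.univ.filter fun u => rank P u = rank P v := by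
  ext u
  simp only [Finset.mem_filter, Finset.mem_univ, true_and]
  exact (rank_eq_iff' P).symm

lemma rank_injective {Q : Finpartition (Finset.univ : Finset (Fin n))}
    (h : rank P = rank Q) : P = Q := by
  have key : ∀ (R S : Finpartition (Finset.univ : Finset (Fin n))),
      rank R = rank S → R.parts ⊆ S.parts := by
    intro R S hRS b hb
    obtain ⟨m, hm⟩ := R.nonempty_of_mem_parts hb
    have h1 : b = R.part m := (R.part_eq_of_mem hb hm).symm
    have h2 : R.part m = S.part m := by
      rw [part_eq_filter, part_eq_filter, hRS]
    rw [h1, h2]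
    exact part_mem' S m
  exact Finpartition.ext (Finset.Subset.antisymm (key P Q h) (key Q P h.symm))

end Partition

section Fiber
variable (f : Fin n → ℕ)

def fpart : Finpartition (Finset.univ : Finset (Fin n)) :=
  letI : DecidableRel ⇑(Setoid.ker f) := fun a b => decidable_of_iff (f a = f b) Iff.rfl
  Finpartition.ofSetoid (Setoid.ker f)

lemma fpart_part (v : Fin n) : (fpart f).part v = Fb f (f v) := by
  letI : DecidableRel ⇑(Setoid.ker f) := fun a b => decidable_of_iff (f a = f b) Iff.rfl
  ext u
  unfold fpart
  rw [Finpartition.mem_part_ofSetoid_iff_rel]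
  simp only [Fb, Finset.mem_filter, Finset.mem_univ, true_and]
  exact ⟨fun h => h.symm, fun h => h.symm⟩

lemma fpart_parts : (fpart f).parts = (Finset.univ.image f).image (Fb f) := by
  rw [parts_eq_image_part]
  ext b
  simp only [Finset.mem_image]
  constructor
  · rintro ⟨v, -, rfl⟩
    exact ⟨f v, ⟨v, Finset.mem_univ v, rfl⟩, (fpart_part f v).symm⟩
  · rintro ⟨c, ⟨v, -, rfl⟩, rfl⟩
    exact ⟨v, Finset.mem_univ v, fpart_part f v⟩

variable {f} {k : ℕ} (hf : Good f) (hk : (Finset.univ.image f).card = k)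

include hf hk

lemma fpart_parts_card : (fpart f).parts.card = k := by
  rw [fpart_parts, ← hk]
  apply Finset.card_image_of_injOn
  intro c hc c' hc' h
  rw [image_eq_range hf hk] at hc hc'
  simp only [Finset.coe_range, Set.mem_Iio] at hc hc'
  obtain ⟨v, hv⟩ := Fb_nonempty hf hk hc
  have h1 : f v = c := by simpa [Fb] using hv
  have h2 : v ∈ Fb f c' := h ▸ hv
  have h3 : f v = c' := by simpa [Fb] using h2
  omega

lemma rank_fpart_eq : rank (fpart f) = f := by
  funext v
  have hfv : f v < k := val_lt_of_good hf hk v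
  rw [rank, fpart_part, rankB]
  have hset : ((fpart f).parts.filter fun p => p.min < (Fb f (f v)).min) =
      (Finset.range (f v)).image (Fb f) := by
    ext p
    simp only [Finset.mem_filter, Finset.mem_image, Finset.mem_range]
    constructor
    · rintro ⟨hp, hmin⟩
      rw [fpart_parts] at hp
      obtain ⟨c, hc, rfl⟩ := Finset.mem_image.mp hp
      rw [image_eq_range hf hk, Finset.mem_range] at hc
      refine ⟨c, ?_, rfl⟩
      rcases lt_trichotomy c (f v) with h | h | h
      · exact h
      · subst h; exact absurd hmin (lt_irrefl _)
      · exact absurd (lt_asymm hmin) (not_not.mpr (min_Fb_lt hf hk h hc))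
    · rintro ⟨c, hc, rfl⟩
      refine ⟨?_, min_Fb_lt hf hk hc hfv⟩
      rw [fpart_parts]
      obtain ⟨u, hu⟩ := Fb_nonempty hf hk (hc.trans hfv)
      have : f u = c := by simpa [Fb] using hu
      exact Finset.mem_image.mpr ⟨c, by rw [image_eq_range hf hk]; simpa using hc.trans hfv, rfl⟩
  rw [hset]
  rw [Finset.card_image_of_injOn, Finset.card_range]
  intro c hc c' hc' h
  simp only [Finset.coe_range, Set.mem_Iio] at hc hc'
  obtain ⟨u, hu⟩ := Fb_nonempty hf hk (hc.trans hfv)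
  have h1 : f u = c := by simpa [Fb] using hu
  have h2 : u ∈ Fb f c' := h ▸ hu
  have h3 : f u = c' := by simpa [Fb] using h2
  omega

omit hf hk in
lemma fpart_indep (hA : AdjOK f) :
    ∀ p ∈ (fpart f).parts, ∀ u ∈ p, ∀ v ∈ p, ¬ (pathGraph n).Adj u v := by
  intro p hp u hu v hv hadj
  rw [fpart_parts] at hp
  obtain ⟨c, -, rfl⟩ := Finset.mem_image.mp hp
  have h1 : f u = c := by simpa [Fb] using hu
  have h2 : f v = c := by simpa [Fb] using hv
  rcases pathGraph_adj.mp hadj with h | h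
  · exact hA u v h (by omega)
  · exact hA v u h (by omega)

end Fiber

def toA (n k : ℕ) (x : {P : Finpartition (Finset.univ : Finset (Fin n)) //
      P.parts.card = k ∧ ∀ p ∈ P.parts, ∀ u ∈ p, ∀ v ∈ p, ¬ (pathGraph n).Adj u v}) :
    A n k :=
  ⟨rank x.1, good_rank x.1, adjOK_rank x.1 x.2.2, by rw [card_image_rank]; exact x.2.1⟩

theorem graphStirling_eq_card_A (n k : ℕ) :
    Nat.card {P : Finpartition (Finset.univ : Finset (Fin n)) //
      P.parts.card = k ∧ ∀ p ∈ P.parts, ∀ u ∈ p, ∀ v ∈ p, ¬ (pathGraph n).Adj u v}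
    = Nat.card (A n k) := by
  apply Nat.card_eq_of_bijective (toA n k)
  constructor
  · intro x y hxy
    apply Subtype.ext
    exact rank_injective _ (congrArg Subtype.val hxy)
  · rintro ⟨f, hG, hA, hc⟩
    refine ⟨⟨fpart f, fpart_parts_card hG hc, fpart_indep hA⟩, ?_⟩
    apply Subtype.ext
    exact rank_fpart_eq hG hc


lemma image_init (f : Fin (n+1) → ℕ) :
    Finset.univ.image f = insert (f (Fin.last n)) (Finset.univ.image (Fin.init f)) := by
  rw [Fin.univ_castSuccEmb, Finset.cons_eq_insert, Finset.image_insert, Finset.map_eq_image,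
    Finset.image_image]
  rfl

lemma Iio_last_image (f : Fin (n+1) → ℕ) :
    (Finset.Iio (Fin.last n)).image f = Finset.univ.image (Fin.init f) := by
  ext c
  simp only [Finset.mem_image, Finset.mem_Iio, Finset.mem_univ, true_and]
  constructor
  · rintro ⟨j, hj, rfl⟩
    have hjn : (j : ℕ) < n := by
      have := Fin.lt_def.mp hj; simpa using this
    exact ⟨⟨j, hjn⟩, congrArg f (Fin.ext (by simp))⟩
  · rintro ⟨i, rfl⟩
    exact ⟨Fin.castSucc i, Fin.castSucc_lt_last i, rfl⟩

lemma Iio_castSucc_image (f : Fin (n+1) → ℕ) (i : Fin n) :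
    (Finset.Iio (Fin.castSucc i)).image f = (Finset.Iio i).image (Fin.init f) := by
  ext c
  simp only [Finset.mem_image, Finset.mem_Iio]
  constructor
  · rintro ⟨j, hj, rfl⟩
    have hjn : (j : ℕ) < n := by
      have := Fin.lt_def.mp hj
      simp only [Fin.coe_castSucc] at this
      omega
    refine ⟨⟨j, hjn⟩, ?_, congrArg f (Fin.ext (by simp))⟩
    · rw [Fin.lt_def]
      have := Fin.lt_def.mp hj
      simpa using this
  · rintro ⟨j, hj, rfl⟩
    exact ⟨Fin.castSucc j, by rw [Fin.lt_def]; simpa using Fin.lt_def.mp hj, rfl⟩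

lemma good_init {f : Fin (n+1) → ℕ} (hf : Good f) : Good (Fin.init f) := by
  intro i
  have := hf (Fin.castSucc i)
  rwa [dc, Iio_castSucc_image, ← dc] at this

lemma adj_init {f : Fin (n+1) → ℕ} (hf : AdjOK f) : AdjOK (Fin.init f) := by
  intro i j hij
  exact hf (Fin.castSucc i) (Fin.castSucc j) (by simpa using hij)

lemma last_le {f : Fin (n+1) → ℕ} (hf : Good f) :
    f (Fin.last n) ≤ (Finset.univ.image (Fin.init f)).card := by
  have := hf (Fin.last n)
  rwa [dc, Iio_last_image] at this

lemma good_snoc {g : Fin n → ℕ} {a : ℕ} (hg : Good g)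
    (ha : a ≤ (Finset.univ.image g).card) : Good (Fin.snoc g a) := by
  intro i
  refine Fin.lastCases ?_ ?_ i
  · rw [Fin.snoc_last, dc, Iio_last_image, Fin.init_snoc]
    exact ha
  · intro j
    rw [Fin.snoc_castSucc, dc, Iio_castSucc_image, Fin.init_snoc]
    exact hg j

lemma adj_snoc {g : Fin n → ℕ} {a : ℕ} (hn : 0 < n) (hg : AdjOK g)
    (ha : a ≠ g ⟨n - 1, by omega⟩) : AdjOK (Fin.snoc g a) := by
  intro i j hij
  by_cases hj : (j : ℕ) < n
  · have hi : (i : ℕ) < n := by omega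
    have e1 : i = Fin.castSucc ⟨i, hi⟩ := Fin.ext (by simp)
    have e2 : j = Fin.castSucc ⟨j, hj⟩ := Fin.ext (by simp)
    rw [e1, e2, Fin.snoc_castSucc, Fin.snoc_castSucc]
    exact hg _ _ (by simpa using hij)
  · have hj' : (j : ℕ) = n := by omega
    have hjl : j = Fin.last n := Fin.ext (by simpa using hj')
    have hi : (i : ℕ) = n - 1 := by omega
    have hil : i = Fin.castSucc ⟨n - 1, by omega⟩ := Fin.ext (by simpa using hi)
    rw [hjl, hil, Fin.snoc_castSucc, Fin.snoc_last]
    exact fun h => ha (h.symm)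

lemma image_snoc (g : Fin n → ℕ) (a : ℕ) :
    Finset.univ.image (Fin.snoc g a) = insert a (Finset.univ.image g) := by
  rw [image_init (Fin.snoc g a), Fin.snoc_last, Fin.init_snoc]

section Rec
variable (n k : ℕ) (hn : 0 < n)

def fwd (x : A (n+1) (k+1)) : (A n (k+1) × Fin k) ⊕ A n k :=
  if hlt : x.1 (Fin.last n) < (Finset.univ.image (Fin.init x.1)).card then
    Sum.inl (⟨⟨Fin.init x.1, good_init x.2.1, adj_init x.2.2.1, by
      -- card of image of init = k+1
      have hmem : x.1 (Fin.last n) ∈ Finset.univ.image (Fin.init x.1) := by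
        rw [image_eq_range (good_init x.2.1) rfl]
        simpa using hlt
      have := x.2.2.2
      rwa [image_init x.1, Finset.insert_eq_self.mpr hmem] at this⟩,
      ⟨if x.1 (Fin.last n) < Fin.init x.1 ⟨n - 1, by omega⟩ then x.1 (Fin.last n)
        else x.1 (Fin.last n) - 1, by
      -- < k
      have hmem : x.1 (Fin.last n) ∈ Finset.univ.image (Fin.init x.1) := by
        rw [image_eq_range (good_init x.2.1) rfl]
        simpa using hlt
      have hcard : (Finset.univ.image (Fin.init x.1)).card = k + 1 := by
        have := x.2.2.2
        rwa [image_init x.1, Finset.insert_eq_self.mpr hmem] at this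
      have h1 : x.1 (Fin.last n) < k + 1 := lt_of_lt_of_le hlt hcard.le
      have h2 : Fin.init x.1 ⟨n - 1, by omega⟩ < k + 1 :=
        val_lt_of_good (good_init x.2.1) hcard _
      have h3 : x.1 (Fin.last n) ≠ Fin.init x.1 ⟨n - 1, by omega⟩ := by
        have h := x.2.2.1 (Fin.castSucc ⟨n - 1, by omega⟩) (Fin.last n) (by simp; omega)
        exact fun he => h he.symm
      split_ifs with h4 <;> omega⟩⟩)
  else
    Sum.inr ⟨Fin.init x.1, good_init x.2.1, adj_init x.2.2.1, by
      have hle : x.1 (Fin.last n) ≤ (Finset.univ.image (Fin.init x.1)).card :=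
        last_le x.2.1
      have heq : x.1 (Fin.last n) = (Finset.univ.image (Fin.init x.1)).card := by omega
      have hnmem : x.1 (Fin.last n) ∉ Finset.univ.image (Fin.init x.1) := by
        rw [image_eq_range (good_init x.2.1) rfl]
        simp [heq]
      have := x.2.2.2
      rw [image_init x.1, Finset.card_insert_of_notMem hnmem] at this
      omega⟩

def bwd (y : (A n (k+1) × Fin k) ⊕ A n k) : A (n+1) (k+1) :=
  match y with
  | Sum.inl (g, b) =>
    ⟨Fin.snoc g.1 (if (b : ℕ) < g.1 ⟨n - 1, by omega⟩ then (b : ℕ) else (b : ℕ) + 1),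
      good_snoc g.2.1 (by
        have hb : (b : ℕ) < k := b.isLt
        rw [g.2.2.2]
        split_ifs <;> omega),
      adj_snoc hn g.2.2.1 (by
        split_ifs with h <;> omega),
      by
        rw [image_snoc, Finset.insert_eq_self.mpr, g.2.2.2]
        rw [image_eq_range g.2.1 g.2.2.2]
        have hb : (b : ℕ) < k := b.isLt
        have := val_lt_of_good g.2.1 g.2.2.2 ⟨n - 1, by omega⟩
        simp only [Finset.mem_range]
        split_ifs <;> omega⟩
  | Sum.inr g =>
    ⟨Fin.snoc g.1 k,
      good_snoc g.2.1 (by rw [g.2.2.2]),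
      adj_snoc hn g.2.2.1 (by
        have := val_lt_of_good g.2.1 g.2.2.2 ⟨n - 1, by omega⟩
        omega),
      by
        rw [image_snoc, Finset.card_insert_of_notMem, g.2.2.2]
        rw [image_eq_range g.2.1 g.2.2.2]
        simp⟩

lemma bwd_fwd (x : A (n+1) (k+1)) : bwd n k hn (fwd n k hn x) = x := by
  apply Subtype.ext
  by_cases hlt : x.1 (Fin.last n) < (Finset.univ.image (Fin.init x.1)).card
  · rw [fwd, dif_pos hlt]
    show Fin.snoc (Fin.init x.1) _ = x.1
    have h3 : x.1 (Fin.last n) ≠ Fin.init x.1 ⟨n - 1, by omega⟩ := by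
      have h := x.2.2.1 (Fin.castSucc ⟨n - 1, by omega⟩) (Fin.last n) (by simp; omega)
      exact fun he => h he.symm
    have : (if (if x.1 (Fin.last n) < Fin.init x.1 ⟨n - 1, by omega⟩ then x.1 (Fin.last n)
        else x.1 (Fin.last n) - 1) < Fin.init x.1 ⟨n - 1, by omega⟩
        then (if x.1 (Fin.last n) < Fin.init x.1 ⟨n - 1, by omega⟩ then x.1 (Fin.last n)
        else x.1 (Fin.last n) - 1)
        else (if x.1 (Fin.last n) < Fin.init x.1 ⟨n - 1, by omega⟩ then x.1 (Fin.last n)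
        else x.1 (Fin.last n) - 1) + 1) = x.1 (Fin.last n) := by
      split_ifs <;> omega
    rw [this, Fin.snoc_init_self]
  · rw [fwd, dif_neg hlt]
    show Fin.snoc (Fin.init x.1) (k : ℕ) = x.1
    have hle : x.1 (Fin.last n) ≤ (Finset.univ.image (Fin.init x.1)).card := last_le x.2.1
    have heq : x.1 (Fin.last n) = (Finset.univ.image (Fin.init x.1)).card := by omega
    have hnmem : x.1 (Fin.last n) ∉ Finset.univ.image (Fin.init x.1) := by
      rw [image_eq_range (good_init x.2.1) rfl]
      simp [heq]
    have hcard : (Finset.univ.image (Fin.init x.1)).card = k := by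
      have := x.2.2.2
      rw [image_init x.1, Finset.card_insert_of_notMem hnmem] at this
      omega
    have hk2 : x.1 (Fin.last n) = (k : ℕ) := by omega
    have hsn := Fin.snoc_init_self x.1
    rw [hk2] at hsn
    exact hsn

lemma fwd_bwd (y : (A n (k+1) × Fin k) ⊕ A n k) : fwd n k hn (bwd n k hn y) = y := by
  rcases y with ⟨g, b⟩ | g
  · have hb : (b : ℕ) < k := b.isLt
    have hval : g.1 ⟨n - 1, by omega⟩ < k + 1 := val_lt_of_good g.2.1 g.2.2.2 _
    have hlt : (bwd n k hn (Sum.inl (g, b))).1 (Fin.last n)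
        < (Finset.univ.image (Fin.init (bwd n k hn (Sum.inl (g, b))).1)).card := by
      show (Fin.snoc g.1 (if (b : ℕ) < g.1 ⟨n - 1, by omega⟩ then (b : ℕ) else (b : ℕ) + 1)
          : Fin (n+1) → ℕ) (Fin.last n)
        < (Finset.univ.image (Fin.init (Fin.snoc g.1
          (if (b : ℕ) < g.1 ⟨n - 1, by omega⟩ then (b : ℕ) else (b : ℕ) + 1)
          : Fin (n+1) → ℕ))).card
      rw [Fin.snoc_last, Fin.init_snoc, g.2.2.2]
      split_ifs <;> omega
    rw [fwd, dif_pos hlt]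
    refine congrArg Sum.inl (Prod.ext (Subtype.ext ?_) (Fin.ext ?_))
    · show Fin.init (Fin.snoc g.1
          (if (b : ℕ) < g.1 ⟨n - 1, by omega⟩ then (b : ℕ) else (b : ℕ) + 1)
          : Fin (n+1) → ℕ) = g.1
      exact Fin.init_snoc _ _
    · show (if (Fin.snoc g.1 (if (b : ℕ) < g.1 ⟨n - 1, by omega⟩ then (b : ℕ) else (b : ℕ) + 1)
          : Fin (n+1) → ℕ) (Fin.last n)
          < Fin.init (Fin.snoc g.1
            (if (b : ℕ) < g.1 ⟨n - 1, by omega⟩ then (b : ℕ) else (b : ℕ) + 1)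
            : Fin (n+1) → ℕ) ⟨n - 1, by omega⟩
          then (Fin.snoc g.1
            (if (b : ℕ) < g.1 ⟨n - 1, by omega⟩ then (b : ℕ) else (b : ℕ) + 1)
            : Fin (n+1) → ℕ) (Fin.last n)
          else (Fin.snoc g.1
            (if (b : ℕ) < g.1 ⟨n - 1, by omega⟩ then (b : ℕ) else (b : ℕ) + 1)
            : Fin (n+1) → ℕ) (Fin.last n) - 1) = (b : ℕ)
      rw [Fin.snoc_last, Fin.init_snoc]
      split_ifs <;> omega
  · have hnlt : ¬ ((bwd n k hn (Sum.inr g)).1 (Fin.last n)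
        < (Finset.univ.image (Fin.init (bwd n k hn (Sum.inr g)).1)).card) := by
      show ¬ ((Fin.snoc g.1 (k : ℕ) : Fin (n+1) → ℕ) (Fin.last n)
        < (Finset.univ.image (Fin.init (Fin.snoc g.1 (k : ℕ) : Fin (n+1) → ℕ))).card)
      rw [Fin.snoc_last, Fin.init_snoc, g.2.2.2]
      omega
    rw [fwd, dif_neg hnlt]
    refine congrArg Sum.inr (Subtype.ext ?_)
    show Fin.init (Fin.snoc g.1 (k : ℕ) : Fin (n+1) → ℕ) = g.1
    exact Fin.init_snoc _ _

lemma card_rec (hpos : 0 < n) : Nat.card (A (n+1) (k+1)) = Nat.card (A n (k+1)) * k + Nat.card (A n k) := by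
  have e : A (n+1) (k+1) ≃ (A n (k+1) × Fin k) ⊕ A n k :=
    ⟨fwd n k hpos, bwd n k hpos, bwd_fwd n k hpos, fwd_bwd n k hpos⟩
  rw [Nat.card_congr e, Nat.card_sum, Nat.card_prod]
  simp [Nat.card_eq_fintype_card]

end Rec


lemma card_A_zero {n : ℕ} (hn : 0 < n) : Nat.card (A n 0) = 0 := by
  have : IsEmpty (A n 0) := by
    constructor
    rintro ⟨f, -, -, hc⟩
    have hne : Nonempty (Fin n) := ⟨⟨0, hn⟩⟩
    have : (Finset.univ.image f).Nonempty :=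
      (Finset.univ_nonempty (α := Fin n)).image f
    rw [Finset.card_eq_zero.mp hc] at this
    exact Finset.not_nonempty_empty this
  exact Nat.card_of_isEmpty

theorem card_A_eq : ∀ n, 1 ≤ n → ∀ k, Nat.card (A n (k+1)) = stirling2 (n-1) k := by
  intro n
  induction n with
  | zero => omega
  | succ n ih =>
    intro _ k
    rcases Nat.eq_or_lt_of_le (Nat.one_le_iff_ne_zero.mpr (Nat.succ_ne_zero n)) with h | h
    · -- n + 1 = 1
      have hn0 : n = 0 := by omega
      subst hn0
      rcases k with _ | k
      · -- A 1 1
        have : Nat.card (A 1 1) = 1 := by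
          rw [Nat.card_eq_one_iff_unique]
          constructor
          · constructor
            rintro ⟨f, hf, -, -⟩ ⟨g, hg, -, -⟩
            apply Subtype.ext
            funext i
            show f i = g i
            have e : (Finset.Iio i) = (∅ : Finset (Fin 1)) := by
              ext j
              simp [Fin.eq_zero j, Fin.eq_zero i]
            have h1 : f i ≤ 0 := by
              have h := hf i
              rw [dc, e] at h
              simpa using h
            have h2 : g i ≤ 0 := by
              have h := hg i
              rw [dc, e] at h
              simpa using h
            omega
          · constructor
            exact ⟨fun _ => 0, fun i => Nat.zero_le _,
              fun i j hij => by have := i.isLt; have := j.isLt; omega,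
              rfl⟩
        simpa [stirling2] using this
      · -- A 1 (k+2) is empty
        have : IsEmpty (A 1 (k+2)) := by
          constructor
          rintro ⟨f, -, -, hc⟩
          have h1 : (Finset.univ.image f).card ≤ 1 := by
            apply le_trans Finset.card_image_le
            simp
          omega
        have : Nat.card (A 1 (k+2)) = 0 := Nat.card_of_isEmpty
        simp [this, stirling2]
    · -- n ≥ 1
      have hn : 0 < n := by omega
      rw [card_rec n k hn]
      rcases k with _ | j
      · rw [card_A_zero hn]
        simp only [Nat.mul_zero, Nat.zero_add, Nat.add_sub_cancel]
        obtain ⟨m, rfl⟩ : ∃ m, n = m + 1 := ⟨n - 1, by omega⟩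
        simp [stirling2]
      · rw [ih hn (j+1), ih hn j]
        obtain ⟨m, rfl⟩ : ∃ m, n = m + 1 := ⟨n - 1, by omega⟩
        simp only [Nat.add_sub_cancel]
        show stirling2 m (j + 1) * (j + 1) + stirling2 m j = stirling2 (m + 1) (j + 1)
        rw [stirling2]
        ring

end PathAux

theorem path_graphStirling_eq (n : ℕ) (hn : 2 ≤ n) (k : ℕ) :
    graphStirling (SimpleGraph.pathGraph n) k = stirling2 (n - 1) (k - 1) := by
  rw [graphStirling, PathAux.graphStirling_eq_card_A]
  rcases k with _ | k
  · rw [PathAux.card_A_zero (by omega)]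
    obtain ⟨m, hm⟩ : ∃ m, n - 1 = m + 1 := ⟨n - 2, by omega⟩
    rw [hm]
    simp [stirling2]
  · rw [PathAux.card_A_eq n (by omega) k]
    simp
end

section
/- The total number of partitions of the vertex set of a forest with n vertices and c components into non-empty independent sets (the Bell number of the forest) equals Σ_{i≥0} C(c-1, i) B_{n-1-i}, where B_m is the m-th Bell number. -/
open Finset SimpleGraph Polynomial

lemma bell_zero : bell 0 = 1 := rfl

lemma stirling2_eq_zero {n k : ℕ} (h : n < k) : stirling2 n k = 0 := by
  induction n generalizing k with
  | zero => cases k with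
    | zero => omega
    | succ k => rfl
  | succ n ih =>
    cases k with
    | zero => omega
    | succ k =>
      show (k + 1) * stirling2 n (k + 1) + stirling2 n k = 0
      rw [ih (by omega), ih (by omega)]
      ring

lemma stirling2_zero (n : ℕ) : stirling2 (n + 1) 0 = 0 := rfl

lemma stirling2_succ_succ (n k : ℕ) :
    stirling2 (n + 1) (k + 1) = ∑ j ∈ range (n + 1), n.choose j * stirling2 j k := by
  induction n generalizing k with
  | zero =>
    cases k with
    | zero => simp [stirling2]
    | succ k => simp [stirling2, stirling2_eq_zero (by omega : 0 < k + 1)]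
  | succ n ih =>
    have key : ∑ j ∈ range (n + 2), (n+1).choose j * stirling2 j k
        = stirling2 (n + 1) (k + 1) + ∑ j ∈ range (n + 1), n.choose j * stirling2 (j + 1) k := by
      rw [Finset.sum_range_succ' (fun j => (n+1).choose j * stirling2 j k) (n + 1)]
      have : ∀ j ∈ range (n + 1), (n+1).choose (j+1) * stirling2 (j+1) k
          = n.choose j * stirling2 (j+1) k + n.choose (j+1) * stirling2 (j+1) k := by
        intro j _; rw [Nat.choose_succ_succ]; ring
      rw [Finset.sum_congr rfl this, Finset.sum_add_distrib]
      have h2 : ∑ j ∈ range (n + 1), n.choose (j+1) * stirling2 (j+1) k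
          + (n+1).choose 0 * stirling2 0 k = stirling2 (n + 1) (k + 1) := by
        rw [ih, Finset.sum_range_succ' (fun j => n.choose j * stirling2 j k) n,
          Finset.sum_range_succ (fun j => n.choose (j+1) * stirling2 (j+1) k) n,
          Nat.choose_succ_self, Nat.choose_zero_right, Nat.choose_zero_right]
        simp
      omega
    rw [key]
    show stirling2 (n + 2) (k + 1) = _
    cases k with
    | zero =>
      have : ∀ j ∈ range (n+1), n.choose j * stirling2 (j+1) 0 = 0 := by
        intro j _; rfl
      rw [Finset.sum_congr rfl this]
      show (0 + 1) * stirling2 (n+1) (0+1) + stirling2 (n+1) 0 = _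
      simp [stirling2_zero]
    | succ k =>
      have : ∀ j ∈ range (n+1), n.choose j * stirling2 (j+1) (k+1)
          = (k+1) * (n.choose j * stirling2 j (k+1)) + n.choose j * stirling2 j k := by
        intro j _; show n.choose j * ((k + 1) * stirling2 j (k + 1) + stirling2 j k) = _; ring
      rw [Finset.sum_congr rfl this, Finset.sum_add_distrib, ← Finset.mul_sum, ← ih, ← ih]
      show (k + 1 + 1) * stirling2 (n+1) (k+1+1) + stirling2 (n+1) (k+1) = _
      ring

lemma sum_stirling2_eq_bell {n j : ℕ} (h : j ≤ n) :
    ∑ k ∈ range (n + 1), stirling2 j k = bell j := by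
  rw [bell]
  symm
  apply Finset.sum_subset (Finset.range_subset_range.2 (by omega))
  intro k _ hk
  exact stirling2_eq_zero (by simp at hk ⊢; omega)

lemma bell_succ (n : ℕ) : bell (n + 1) = ∑ j ∈ range (n + 1), n.choose j * bell j := by
  rw [bell, Finset.sum_range_succ' (fun k => stirling2 (n+1) k) (n + 1)]
  have : ∀ k ∈ range (n + 1), stirling2 (n+1) (k+1)
      = ∑ j ∈ range (n + 1), n.choose j * stirling2 j k :=
    fun k _ => stirling2_succ_succ n k
  rw [Finset.sum_congr rfl this, stirling2_zero, Finset.sum_comm]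
  simp only [← Finset.mul_sum, add_zero]
  exact Finset.sum_congr rfl fun j hj => by
    rw [sum_stirling2_eq_bell (by simpa using Nat.lt_succ_iff.mp (Finset.mem_range.mp hj))]

lemma bell_rec (n : ℕ) : bell (n + 1) = ∑ i ∈ range (n + 1), n.choose i * bell (n - i) := by
  rw [bell_succ, ← Finset.sum_range_reflect]
  refine Finset.sum_congr rfl fun i hi => ?_
  simp only [Finset.mem_range] at hi
  rw [Nat.add_sub_cancel, Nat.choose_symm (by omega)]

def bellF (n c : ℕ) : ℕ := ∑ i ∈ range c, (c - 1).choose i * bell (n - 1 - i)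

lemma bellF_self {n : ℕ} (h : 1 ≤ n) : bellF n n = bell n := by
  cases n with
  | zero => omega
  | succ m =>
    rw [bellF, bell_rec]
    exact Finset.sum_congr rfl fun i _ => by
      congr 2 <;> omega

lemma bellF_pascal (n c : ℕ) (hc : 1 ≤ c) :
    bellF n (c + 1) = bellF n c + bellF (n - 1) c := by
  obtain ⟨d, rfl⟩ : ∃ d, c = d + 1 := ⟨c - 1, by omega⟩
  rw [bellF]
  simp only [Nat.add_sub_cancel]
  rw [Finset.sum_range_succ' (fun i => (d+1).choose i * bell (n - 1 - i)) (d + 1)]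
  have : ∀ i ∈ range (d + 1), (d+1).choose (i+1) * bell (n - 1 - (i+1))
        = d.choose i * bell (n - 1 - 1 - i) + d.choose (i+1) * bell (n - 1 - (i+1)) := by
    intro i _
    rw [Nat.choose_succ_succ]
    have : n - 1 - (i + 1) = n - 1 - 1 - i := by omega
    rw [this]; ring
  rw [Finset.sum_congr rfl this, Finset.sum_add_distrib]
  have h1 : ∑ i ∈ range (d + 1), d.choose i * bell (n - 1 - 1 - i) = bellF (n - 1) (d + 1) := by
    rw [bellF]
    simp only [Nat.add_sub_cancel]
  have h2 : ∑ i ∈ range (d + 1), d.choose (i+1) * bell (n - 1 - (i+1))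
        + (d+1).choose 0 * bell (n - 1 - 0) = bellF n (d + 1) := by
    rw [bellF]
    simp only [Nat.add_sub_cancel]
    rw [Finset.sum_range_succ' (fun i => d.choose i * bell (n - 1 - i)) d,
      Finset.sum_range_succ (fun i => d.choose (i+1) * bell (n - 1 - (i+1))) d,
      Nat.choose_succ_self, Nat.choose_zero_right, Nat.choose_zero_right]
    simp
  omega

instance setoid_finite {V : Type} [Finite V] : Finite (Setoid V) :=
  Finite.of_injective (fun s => s.r)
    (fun a b h => Setoid.ext fun x y => iff_of_eq (congrFun (congrFun h x) y))

lemma nat_card_eq_sum_fibers {X I : Type} [Finite X] [Fintype I] [DecidableEq I] (g : X → I) :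
    Nat.card X = ∑ i : I, Nat.card {x : X // g x = i} := by
  classical
  have : Fintype X := Fintype.ofFinite X
  simp only [Nat.card_eq_fintype_card, Fintype.card_subtype]
  exact Finset.card_eq_sum_card_fiberwise (fun x _ => Finset.mem_univ (g x))

lemma nat_card_eq_sum_fibers_range {X : Type} [Finite X] (f : X → ℕ) (m : ℕ)
    (h : ∀ x, f x < m) :
    Nat.card X = ∑ k ∈ range m, Nat.card {x : X // f x = k} := by
  classical
  have : Fintype X := Fintype.ofFinite X
  simp only [Nat.card_eq_fintype_card, Fintype.card_subtype]
  exact Finset.card_eq_sum_card_fiberwise (fun x _ => Finset.mem_range.2 (h x))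

section Extend
variable {V : Type} {B : Finset V}

/-- Extend a setoid on the complement of `B` to all of `V`, with `B` as one extra class. -/
def extendSetoid (B : Finset V) (t : Setoid {x : V // x ∉ B}) : Setoid V where
  r a b := (a ∈ B ∧ b ∈ B) ∨ ∃ (ha : a ∉ B) (hb : b ∉ B), t.r ⟨a, ha⟩ ⟨b, hb⟩
  iseqv := by
    constructor
    · intro a
      by_cases ha : a ∈ B
      · exact Or.inl ⟨ha, ha⟩
      · exact Or.inr ⟨ha, ha, t.refl _⟩
    · rintro a b (⟨ha, hb⟩ | ⟨ha, hb, hab⟩)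
      · exact Or.inl ⟨hb, ha⟩
      · exact Or.inr ⟨hb, ha, t.symm hab⟩
    · rintro a b c (⟨ha, hb⟩ | ⟨ha, hb, hab⟩) (⟨hb', hc⟩ | ⟨hb', hc, hbc⟩)
      · exact Or.inl ⟨ha, hc⟩
      · exact absurd hb hb'
      · exact absurd hb' hb
      · exact Or.inr ⟨ha, hc, t.trans hab hbc⟩

/-- Setoids on `V` whose class of `v` is exactly `B` correspond to setoids on the
complement of `B`. -/
noncomputable def fiberEquiv (v : V) (hv : v ∈ B) :
    {s : Setoid V // ∀ x, s.r v x ↔ x ∈ B} ≃ Setoid {x : V // x ∉ B} where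
  toFun s := Setoid.comap Subtype.val s.1
  invFun t := ⟨extendSetoid B t, by
    intro x
    constructor
    · rintro (⟨_, hx⟩ | ⟨hv', _⟩)
      · exact hx
      · exact absurd hv hv'
    · intro hx
      exact Or.inl ⟨hv, hx⟩⟩
  left_inv := by
    rintro ⟨s, hs⟩
    apply Subtype.ext
    apply Setoid.ext
    intro a b
    constructor
    · rintro (⟨ha, hb⟩ | ⟨_, _, h⟩)
      · exact s.trans (s.symm ((hs a).mpr ha)) ((hs b).mpr hb)
      · exact h
    · intro h
      by_cases ha : a ∈ B
      · exact Or.inl ⟨ha, (hs b).mp (s.trans ((hs a).mpr ha) h)⟩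
      · refine Or.inr ⟨ha, fun hb => ha ?_, h⟩
        exact (hs a).mp (s.trans ((hs b).mpr hb) (s.symm h))
  right_inv := by
    intro t
    apply Setoid.ext
    intro a b
    constructor
    · rintro (⟨h, _⟩ | ⟨_, _, h⟩)
      · exact absurd h a.2
      · exact h
    · intro h
      exact Or.inr ⟨a.2, b.2, h⟩
end Extend

lemma card_setoid : ∀ (n : ℕ) (V : Type) [Fintype V], Fintype.card V = n →
    Nat.card (Setoid V) = bell n := by
  intro n
  induction n using Nat.strong_induction_on with
  | _ n ih =>
    intro V _ hn
    cases n with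
    | zero =>
      have : IsEmpty V := Fintype.card_eq_zero_iff.mp hn
      have : Unique (Setoid V) :=
        { default := ⊤, uniq := fun s => Setoid.ext fun {x y} => (this.elim x) }
      rw [Nat.card_unique, bell_zero]
    | succ m =>
      classical
      have : Nonempty V := Fintype.card_pos_iff.mp (by omega)
      obtain ⟨v⟩ := this
      rw [nat_card_eq_sum_fibers (fun s : Setoid V => univ.filter (fun x => s.r v x))]
      have hfib : ∀ B : Finset V,
          Nat.card {s : Setoid V // univ.filter (fun x => s.r v x) = B}
          = if v ∈ B then bell (m + 1 - B.card) else 0 := by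
        intro B
        by_cases hv : v ∈ B
        · rw [if_pos hv]
          have e1 : {s : Setoid V // univ.filter (fun x => s.r v x) = B}
              ≃ {s : Setoid V // ∀ x, s.r v x ↔ x ∈ B} :=
            Equiv.subtypeEquivRight (fun s => by
              rw [Finset.ext_iff]
              constructor
              · intro h x; have := h x; simpa using this
              · intro h x; simpa using h x)
          rw [Nat.card_congr (e1.trans (fiberEquiv v hv))]
          have hcard : Fintype.card {x : V // x ∉ B} = m + 1 - B.card := by
            rw [← hn]
            simpa using Fintype.card_subtype_compl (fun x => x ∈ B)
          exact ih _ (by have := Finset.card_pos.mpr ⟨v, hv⟩; omega) _ hcard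
        · rw [if_neg hv]
          have : IsEmpty {s : Setoid V // univ.filter (fun x => s.r v x) = B} := by
            constructor
            rintro ⟨s, hs⟩
            apply hv
            rw [← hs]
            simp only [Finset.mem_filter, Finset.mem_univ, true_and]
            exact s.refl v
          simp [Nat.card_of_isEmpty]
      rw [Finset.sum_congr rfl (fun B _ => hfib B)]
      rw [Finset.sum_ite, Finset.sum_const_zero, add_zero]
      -- now reindex over subsets of univ.erase v
      have hbij : ∑ B ∈ univ.filter (fun B : Finset V => v ∈ B), bell (m + 1 - B.card)
          = ∑ A ∈ (univ.erase v).powerset, bell (m - A.card) := by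
        apply Finset.sum_nbij' (fun B => B.erase v) (fun A => insert v A)
        · intro B hB
          simp only [Finset.mem_filter, Finset.mem_univ, true_and] at hB
          simp only [Finset.mem_powerset]
          intro x hx
          simp only [Finset.mem_erase] at hx ⊢
          exact ⟨hx.1, Finset.mem_univ x⟩
        · intro A hA
          simp [Finset.mem_insert]
        · intro B hB
          simp only [Finset.mem_filter, Finset.mem_univ, true_and] at hB
          exact Finset.insert_erase hB
        · intro A hA
          simp only [Finset.mem_powerset] at hA
          apply Finset.erase_insert
          intro hv'
          exact (Finset.mem_erase.mp (hA hv')).1 rfl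
        · intro B hB
          simp only [Finset.mem_filter, Finset.mem_univ, true_and] at hB
          rw [Finset.card_erase_of_mem hB]
          have hb1 : 1 ≤ B.card := Finset.card_pos.mpr ⟨v, hB⟩
          congr 1
          omega
      rw [hbij]
      rw [Finset.sum_powerset ((univ.erase v)) (fun A => bell (m - A.card))]
      have hev : (univ.erase v).card = m := by
        rw [Finset.card_erase_of_mem (Finset.mem_univ v), Finset.card_univ, hn]
        omega
      rw [hev, bell_rec]
      refine Finset.sum_congr rfl fun j hj => ?_
      have : ∀ A ∈ Finset.powersetCard j (univ.erase v), bell (m - A.card) = bell (m - j) := by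
        intro A hA
        rw [(Finset.mem_powersetCard.mp hA).2]
      rw [Finset.sum_congr rfl this, Finset.sum_const, Finset.card_powersetCard, hev,
        smul_eq_mul]

section PartSetoid
variable {V : Type} [Fintype V] [DecidableEq V]

instance finpartition_finite : Finite (Finpartition (Finset.univ : Finset V)) :=
  Finite.of_injective (fun P => P.parts) (fun P Q h => Finpartition.ext h)

/-- The setoid associated to a finpartition of `univ`. -/
def toSetoid (P : Finpartition (Finset.univ : Finset V)) : Setoid V where
  r a b := ∃ t ∈ P.parts, a ∈ t ∧ b ∈ t
  iseqv := by
    constructor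
    · intro a
      obtain ⟨t, ht, hat⟩ := P.exists_mem (Finset.mem_univ a)
      exact ⟨t, ht, hat, hat⟩
    · rintro a b ⟨t, ht, ha, hb⟩; exact ⟨t, ht, hb, ha⟩
    · rintro a b c ⟨t, ht, ha, hb⟩ ⟨u, hu, hb', hc⟩
      exact ⟨t, ht, ha, P.eq_of_mem_parts hu ht hb' hb ▸ hc⟩

lemma toSetoid_r {P : Finpartition (Finset.univ : Finset V)} {a b : V} :
    (toSetoid P).r a b ↔ b ∈ P.part a := by
  constructor
  · rintro ⟨t, ht, ha, hb⟩
    rw [P.part_eq_of_mem ht ha]; exact hb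
  · intro h
    exact ⟨P.part a, P.part_mem.2 (Finset.mem_univ a), P.mem_part (Finset.mem_univ a), h⟩

noncomputable def finpartitionEquivSetoid :
    Finpartition (Finset.univ : Finset V) ≃ Setoid V := by
  classical
  exact {
    toFun := toSetoid
    invFun := fun s => Finpartition.ofSetoid s
    left_inv := by
      intro P
      apply Finpartition.ext
      ext t
      constructor
      · intro ht
        simp only [Finpartition.ofSetoid, Finpartition.ofSetSetoid_parts, Finset.mem_image, Finset.mem_univ, true_and] at ht
        obtain ⟨a, rfl⟩ := ht
        have : ({b | (toSetoid P).r a b} : Finset V) = P.part a := by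
          ext b
          simp only [Finset.mem_filter, Finset.mem_univ, true_and]
          exact toSetoid_r
        rw [this]
        exact P.part_mem.2 (Finset.mem_univ a)
      · intro ht
        simp only [Finpartition.ofSetoid, Finpartition.ofSetSetoid_parts, Finset.mem_image, Finset.mem_univ, true_and]
        obtain ⟨a, ha⟩ := P.nonempty_of_mem_parts ht
        refine ⟨a, ?_⟩
        have : ({b | (toSetoid P).r a b} : Finset V) = P.part a := by
          ext b
          simp only [Finset.mem_filter, Finset.mem_univ, true_and]
          exact toSetoid_r
        rw [this, P.part_eq_of_mem ht ha]
    right_inv := by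
      intro s
      apply Setoid.ext
      intro a b
      exact Iff.trans toSetoid_r Finpartition.mem_part_ofSetoid_iff_rel }

lemma sum_graphStirling_eq (G : SimpleGraph V) :
    ∑ k ∈ range (Fintype.card V + 1), graphStirling G k
      = Nat.card {s : Setoid V // ∀ u v, G.Adj u v → ¬ s.r u v} := by
  classical
  set X := {P : Finpartition (Finset.univ : Finset V) //
      ∀ p ∈ P.parts, ∀ u ∈ p, ∀ v ∈ p, ¬ G.Adj u v} with hX
  have key : Nat.card X = ∑ k ∈ range (Fintype.card V + 1),
      Nat.card {x : X // x.1.parts.card = k} :=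
    nat_card_eq_sum_fibers_range _ _ (fun x =>
      Nat.lt_succ_of_le (le_trans x.1.card_parts_le_card (by simp)))
  have e2 : ∀ k, graphStirling G k = Nat.card {x : X // x.1.parts.card = k} := by
    intro k
    apply Nat.card_congr
    exact Equiv.trans
      (Equiv.subtypeEquivRight (fun P => and_comm))
      (Equiv.subtypeSubtypeEquivSubtypeInter _ _).symm
  rw [Finset.sum_congr rfl (fun k _ => e2 k), ← key]
  apply Nat.card_congr
  apply Equiv.subtypeEquiv finpartitionEquivSetoid
  intro P
  constructor
  · intro h u v hadj huv
    obtain ⟨t, ht, hu, hv⟩ := huv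
    exact h t ht u hu v hv hadj
  · intro h p hp u hu v hv hadj
    exact h u v hadj ⟨p, hp, hu, hv⟩
end PartSetoid

lemma exists_leaf {V : Type} [Fintype V] {G : SimpleGraph V} (hG : G.IsAcyclic)
    {a b : V} (hab : G.Adj a b) :
    ∃ v u, G.Adj u v ∧ ∀ w, G.Adj w v → w = u := by
  classical
  set S : Finset ℕ := (range (Fintype.card V)).filter
    (fun n => ∃ x y : V, ∃ p : G.Walk x y, p.IsPath ∧ p.length = n) with hS
  have h1 : 1 ∈ S := by
    rw [hS, Finset.mem_filter, Finset.mem_range]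
    refine ⟨?_, a, b, (SimpleGraph.Path.singleton hab).1,
      (SimpleGraph.Path.singleton hab).2, rfl⟩
    rw [Fintype.one_lt_card_iff_nontrivial]
    exact ⟨a, b, hab.ne⟩
  have hne : S.Nonempty := ⟨1, h1⟩
  set N := S.max' hne with hN
  have hmax : ∀ (x' y' : V) (q : G.Walk x' y'), q.IsPath → q.length ≤ N := by
    intro x' y' q hq
    exact S.le_max' _ (by
      rw [hS, Finset.mem_filter, Finset.mem_range]
      exact ⟨hq.length_lt, x', y', q, hq, rfl⟩)
  have hN1 : 1 ≤ N := S.le_max' 1 h1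
  obtain ⟨hNmem, x, y, p, hp, hlen⟩ := Finset.mem_filter.mp (S.max'_mem hne)
  -- use reverse to get a max path starting at y
  obtain ⟨q, hqp, hqlen⟩ : ∃ q : G.Walk y x, q.IsPath ∧ q.length = N :=
    ⟨p.reverse, hp.reverse, by rw [SimpleGraph.Walk.length_reverse, hlen]⟩
  cases q with
  | nil => rw [SimpleGraph.Walk.length_nil] at hqlen; omega
  | @cons _ z _ h q' =>
    rw [SimpleGraph.Walk.cons_isPath_iff] at hqp
    obtain ⟨hq'p, hysup⟩ := hqp
    refine ⟨y, z, h.symm, ?_⟩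
    intro w hw
    by_cases hwsup : w ∈ q'.support
    · -- uniqueness of paths gives w = z
      by_contra hne'
      have hun := hG.path_unique (SimpleGraph.Path.singleton hw.symm)
        ⟨SimpleGraph.Walk.cons h (q'.takeUntil w hwsup), by
          rw [SimpleGraph.Walk.cons_isPath_iff]
          exact ⟨hq'p.takeUntil hwsup, fun hy => hysup (q'.support_takeUntil_subset hwsup hy)⟩⟩
      have hval : (SimpleGraph.Walk.cons hw.symm SimpleGraph.Walk.nil)
          = SimpleGraph.Walk.cons h (q'.takeUntil w hwsup) := congrArg Subtype.val hun
      have hlen12 := congrArg SimpleGraph.Walk.length hval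
      simp only [SimpleGraph.Walk.length_cons, SimpleGraph.Walk.length_nil] at hlen12
      have hz0 : (q'.takeUntil w hwsup).length = 0 := by omega
      exact hne' (SimpleGraph.Walk.eq_of_length_eq_zero hz0).symm
    · -- extend the path: contradiction with maximality
      exfalso
      have hwy : w ≠ y := hw.ne
      have hwq : w ∉ (SimpleGraph.Walk.cons h q').support := by
        rw [SimpleGraph.Walk.support_cons]
        simp only [List.mem_cons]
        rintro (rfl | hmem)
        · exact hwy rfl
        · exact hwsup hmem
      have hext : (SimpleGraph.Walk.cons hw (SimpleGraph.Walk.cons h q')).IsPath := by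
        rw [SimpleGraph.Walk.cons_isPath_iff]
        exact ⟨(SimpleGraph.Walk.cons_isPath_iff h q').mpr ⟨hq'p, hysup⟩, hwq⟩
      have := hmax _ _ _ hext
      rw [SimpleGraph.Walk.length_cons] at this
      omega

section Avoid
variable {V : Type} {G : SimpleGraph V} {v u : V}

/-- The inclusion homomorphism from the induced graph on `{x // x ≠ v}`. -/
def inclHom (G : SimpleGraph V) (v : V) :
    (G.comap (Subtype.val : {x : V // x ≠ v} → V)) →g G where
  toFun := Subtype.val
  map_rel' := fun h => h

lemma reach_avoid (hleaf : ∀ w, G.Adj w v → w = u) :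
    ∀ (n : ℕ) {x y : V} (p : G.Walk x y), p.length ≤ n → ∀ (hx : x ≠ v) (hy : y ≠ v),
      (G.comap (Subtype.val : {z : V // z ≠ v} → V)).Reachable ⟨x, hx⟩ ⟨y, hy⟩ := by
  intro n
  induction n with
  | zero =>
    intro x y p hp hx hy
    cases p with
    | nil => exact Reachable.refl _
    | cons h q => simp [SimpleGraph.Walk.length_cons] at hp
  | succ n ih =>
    intro x y p hp hx hy
    cases p with
    | nil => exact Reachable.refl _
    | @cons _ z _ h q =>
      rw [SimpleGraph.Walk.length_cons] at hp
      by_cases hz : z = v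
      · have hxu : x = u := hleaf x (hz ▸ h)
        cases q with
        | nil => exact absurd hz hy
        | @cons _ z2 _ h2 q2 =>
          have hz2u : z2 = u := hleaf z2 (hz ▸ h2.symm)
          have hun : u ≠ v := fun e => hx (hxu.trans e)
          have hz2v : z2 ≠ v := fun e => hun (hz2u.symm.trans e)
          rw [SimpleGraph.Walk.length_cons] at hp
          have hr := ih q2 (by omega) hz2v hy
          have hxx : (⟨x, hx⟩ : {z : V // z ≠ v}) = ⟨z2, hz2v⟩ :=
            Subtype.ext (hxu.trans hz2u.symm)
          rw [hxx]
          exact hr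
      · have hadj : (G.comap (Subtype.val : {z : V // z ≠ v} → V)).Adj ⟨x, hx⟩ ⟨z, hz⟩ := h
        exact hadj.reachable.trans (ih q (by omega) hz hy)

/-- A walk from `v` in a graph where `v` is isolated ends at `v`. -/
lemma walk_from_isolated (hv : ∀ w, ¬ G.Adj v w) {y : V} (p : G.Walk v y) : y = v := by
  cases p with
  | nil => rfl
  | cons h q => exact absurd h (hv _)

lemma cc_card_leaf [Fintype V] (hu : G.Adj u v) (hleaf : ∀ w, G.Adj w v → w = u) :
    Nat.card (G.comap (Subtype.val : {x : V // x ≠ v} → V)).ConnectedComponent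
      = Nat.card G.ConnectedComponent := by
  apply Nat.card_eq_of_bijective (ConnectedComponent.map (inclHom G v))
  constructor
  · intro c1 c2
    refine ConnectedComponent.ind₂ (fun a b hab => ?_) c1 c2
    rw [ConnectedComponent.map_mk, ConnectedComponent.map_mk] at hab
    have hreach := ConnectedComponent.exact hab
    obtain ⟨p⟩ := hreach
    exact ConnectedComponent.sound (by
      have := reach_avoid hleaf p.length p le_rfl a.2 b.2
      exact this)
  · intro c
    refine ConnectedComponent.ind (fun x => ?_) c
    by_cases hx : x = v
    · subst hx
      refine ⟨(G.comap _).connectedComponentMk ⟨u, hu.ne⟩, ?_⟩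
      rw [ConnectedComponent.map_mk]
      exact ConnectedComponent.sound hu.reachable
    · refine ⟨(G.comap _).connectedComponentMk ⟨x, hx⟩, ?_⟩
      rw [ConnectedComponent.map_mk]
      rfl

lemma cc_card_isolated [Fintype V] (hv : ∀ w, ¬ G.Adj v w) :
    Nat.card G.ConnectedComponent
      = Nat.card (G.comap (Subtype.val : {x : V // x ≠ v} → V)).ConnectedComponent + 1 := by
  classical
  have hleaf : ∀ w, G.Adj w v → w = v := fun w h => absurd h.symm (hv w)
  have e : G.ConnectedComponent
      ≃ Option (G.comap (Subtype.val : {x : V // x ≠ v} → V)).ConnectedComponent := by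
    refine {
      toFun := ConnectedComponent.lift (fun x => if h : x = v then none else
        some ((G.comap _).connectedComponentMk ⟨x, h⟩)) ?_
      invFun := fun o => o.elim (G.connectedComponentMk v)
        (ConnectedComponent.map (inclHom G v))
      left_inv := ?_
      right_inv := ?_ }
    · intro x y p _
      by_cases hx : x = v
      · have hy : y = v := walk_from_isolated hv (hx ▸ p)
        rw [dif_pos hx, dif_pos hy]
      · have hy : y ≠ v := by
          intro hy
          exact hx (walk_from_isolated hv (hy ▸ p.reverse))
        rw [dif_neg hx, dif_neg hy]
        exact congrArg some (ConnectedComponent.sound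
          (by simpa using reach_avoid hleaf p.length p le_rfl hx hy))
    · refine ConnectedComponent.ind (fun x => ?_)
      by_cases hx : x = v
      · simp only [ConnectedComponent.lift_mk, dif_pos hx, Option.elim_none]
        rw [hx]
      · simp only [ConnectedComponent.lift_mk, dif_neg hx, Option.elim_some,
          ConnectedComponent.map_mk]
        rfl
    · rintro (_ | c)
      · exact dif_pos rfl
      · refine ConnectedComponent.ind (fun a => ?_) c
        simp only [Option.elim_some, ConnectedComponent.map_mk, ConnectedComponent.lift_mk]
        rw [show ((inclHom G v) a : V) = a.1 from rfl, dif_neg a.2]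
  rw [Nat.card_congr e, Nat.card_eq_fintype_card, Nat.card_eq_fintype_card,
    Fintype.card_option]
end Avoid

lemma card_split {X : Type} [Finite X] (p q : X → Prop) :
    Nat.card {x : X // p x}
      = Nat.card {x : X // p x ∧ q x} + Nat.card {x : X // p x ∧ ¬ q x} := by
  classical
  have : Fintype X := Fintype.ofFinite X
  simp only [Nat.card_eq_fintype_card, Fintype.card_subtype]
  rw [← Finset.filter_filter, ← Finset.filter_filter]
  exact (Finset.card_filter_add_card_filter_not (p := q)).symm

section Contract
variable {V : Type} {G : SimpleGraph V} {u v : V}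

open scoped Classical in
/-- Map `V` to `{x // x ≠ v}` sending `v` to `u`. -/
noncomputable def liftf (hne : u ≠ v) : V → {x : V // x ≠ v} :=
  fun a => if h : a = v then ⟨u, hne⟩ else ⟨a, h⟩

lemma liftf_eq (hne : u ≠ v) {a : V} (h : a ≠ v) : liftf hne a = ⟨a, h⟩ := dif_neg h

lemma liftf_v (hne : u ≠ v) : liftf hne v = ⟨u, hne⟩ := dif_pos rfl

lemma G'_isolated (huv : G.Adj u v) (hleaf : ∀ w, G.Adj w v → w = u) :
    ∀ w, ¬ (G.deleteEdges {s(u,v)}).Adj v w := by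
  intro w h
  rw [SimpleGraph.deleteEdges_adj] at h
  obtain ⟨hadj, hne⟩ := h
  apply hne
  rw [hleaf w hadj.symm]
  rw [Set.mem_singleton_iff, Sym2.eq_swap]

/-- Independent setoids of `G - uv` joining `u,v` correspond to independent setoids
of the graph with `v` deleted. -/
noncomputable def contractEquiv (huv : G.Adj u v) (hleaf : ∀ w, G.Adj w v → w = u) :
    {s : Setoid V // (∀ a b, (G.deleteEdges {s(u,v)}).Adj a b → ¬ s.r a b) ∧ s.r u v}
      ≃ {t : Setoid {x : V // x ≠ v} //
          ∀ a b, (G.comap (Subtype.val : {x : V // x ≠ v} → V)).Adj a b → ¬ t.r a b} where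
  toFun s := ⟨Setoid.comap Subtype.val s.1, by
    intro a b hadj hr
    refine s.2.1 a.1 b.1 ?_ hr
    rw [SimpleGraph.deleteEdges_adj]
    refine ⟨hadj, ?_⟩
    rw [Set.mem_singleton_iff]
    intro hmem
    rcases Sym2.eq_iff.mp hmem with ⟨_, h2⟩ | ⟨h1, _⟩
    · exact b.2 h2
    · exact a.2 h1⟩
  invFun t := ⟨Setoid.comap (liftf huv.ne) t.1, by
    constructor
    · intro a b hadj hr
      have ha : a ≠ v := fun e => G'_isolated huv hleaf b (e ▸ hadj)
      have hb : b ≠ v := fun e => G'_isolated huv hleaf a (e ▸ hadj.symm)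
      have hr' : t.1 (liftf huv.ne a) (liftf huv.ne b) := hr
      rw [liftf_eq huv.ne ha, liftf_eq huv.ne hb] at hr'
      exact t.2 ⟨a, ha⟩ ⟨b, hb⟩ ((SimpleGraph.deleteEdges_adj).mp hadj).1 hr'
    · show t.1 (liftf huv.ne u) (liftf huv.ne v)
      rw [liftf_v huv.ne, liftf_eq huv.ne huv.ne]⟩
  left_inv := by
    rintro ⟨s, hs⟩
    apply Subtype.ext
    apply Setoid.ext
    intro a b
    show s ((liftf huv.ne a) : V) ((liftf huv.ne b) : V) ↔ s a b
    have key : ∀ x : V, s.r ((liftf huv.ne x) : V) x := by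
      intro x
      by_cases hx : x = v
      · subst hx
        rw [liftf_v huv.ne]
        exact hs.2
      · rw [liftf_eq huv.ne hx]
    constructor
    · intro h
      exact s.trans (s.symm (key a)) (s.trans h (key b))
    · intro h
      exact s.trans (key a) (s.trans h (s.symm (key b)))
  right_inv := by
    rintro ⟨t, ht⟩
    apply Subtype.ext
    apply Setoid.ext
    intro a b
    show t (liftf huv.ne a.1) (liftf huv.ne b.1) ↔ t a b
    rw [liftf_eq huv.ne a.2, liftf_eq huv.ne b.2]
end Contract

lemma acyclic_of_le {V : Type} {G H : SimpleGraph V} (hle : H ≤ G) (hG : G.IsAcyclic) :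
    H.IsAcyclic := fun _ c hc => hG (c.mapLe hle) (hc.mapLe hle)

lemma acyclic_comap {V : Type} {G : SimpleGraph V} {v : V} (hG : G.IsAcyclic) :
    (G.comap (Subtype.val : {x : V // x ≠ v} → V)).IsAcyclic :=
  fun _ c hc => hG (c.map (inclHom G v)) (hc.map Subtype.val_injective)

lemma cc_card_bot {V : Type} [Fintype V] :
    Nat.card (⊥ : SimpleGraph V).ConnectedComponent = Fintype.card V := by
  rw [← Nat.card_eq_fintype_card]
  symm
  apply Nat.card_eq_of_bijective (fun x => (⊥ : SimpleGraph V).connectedComponentMk x)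
  constructor
  · intro x y h
    exact (SimpleGraph.reachable_bot).mp (SimpleGraph.ConnectedComponent.exact h)
  · exact SimpleGraph.ConnectedComponent.ind (fun x => ⟨x, rfl⟩)

lemma bot_count (V : Type) [Fintype V] [Nonempty V] :
    Nat.card {s : Setoid V // ∀ a b, (⊥ : SimpleGraph V).Adj a b → ¬ s.r a b}
      = bellF (Fintype.card V) (Nat.card (⊥ : SimpleGraph V).ConnectedComponent) := by
  have h1 : Nat.card {s : Setoid V // ∀ a b, (⊥ : SimpleGraph V).Adj a b → ¬ s.r a b}
      = Nat.card (Setoid V) :=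
    Nat.card_congr (Equiv.subtypeUnivEquiv (fun s a b h => absurd h (by simp)))
  rw [h1, cc_card_bot, card_setoid _ _ rfl, bellF_self Fintype.card_pos]

theorem main_count : ∀ (m : ℕ) (V : Type) [Fintype V] [Nonempty V] (G : SimpleGraph V),
    Nat.card G.edgeSet ≤ m → G.IsAcyclic →
    Nat.card {s : Setoid V // ∀ a b, G.Adj a b → ¬ s.r a b}
      = bellF (Fintype.card V) (Nat.card G.ConnectedComponent) := by
  intro m
  induction m with
  | zero =>
    intro V _ _ G he _
    have : IsEmpty G.edgeSet := by
      rcases Nat.card_eq_zero.mp (Nat.le_zero.mp he) with h | h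
      · exact h
      · exact (h.not_finite (Set.toFinite _)).elim
    have hbot : G = ⊥ := SimpleGraph.edgeSet_eq_empty.mp (Set.isEmpty_coe_sort.mp this)
    subst hbot
    exact bot_count V
  | succ m ih =>
    intro V _ _ G he hG
    classical
    by_cases hbot : G = ⊥
    · subst hbot; exact bot_count V
    · have hedge : ∃ a b, G.Adj a b := by
        by_contra h
        push_neg at h
        exact hbot (by ext a b; simp [h a b])
      obtain ⟨a, b, hab⟩ := hedge
      obtain ⟨v, u, huv, hleaf⟩ := exists_leaf hG hab
      have hNW : Nonempty {x : V // x ≠ v} := ⟨⟨u, huv.ne⟩⟩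
      set G' := G.deleteEdges {s(u,v)} with hG'def
      set H := G.comap (Subtype.val : {x : V // x ≠ v} → V) with hHdef
      -- edge counts
      have hev : s(u,v) ∈ G.edgeSet := huv
      have hG'card : Nat.card G'.edgeSet = Nat.card G.edgeSet - 1 := by
        rw [Nat.card_coe_set_eq, Nat.card_coe_set_eq, hG'def,
          SimpleGraph.edgeSet_deleteEdges, Set.ncard_diff_singleton_of_mem hev]
      haveI : Nonempty G.edgeSet := ⟨⟨_, hev⟩⟩
      have hGpos : 1 ≤ Nat.card G.edgeSet := Nat.card_pos
      have heG' : Nat.card G'.edgeSet ≤ m := by omega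
      -- H edges inject into G' edges
      have heH : Nat.card H.edgeSet ≤ m := by
        refine le_trans (Nat.card_le_card_of_injective
          (fun e => (⟨Sym2.map Subtype.val e.1, ?_⟩ : G'.edgeSet)) ?_) heG'
        · obtain ⟨e, hme⟩ := e
          revert hme
          refine Sym2.ind (fun x y hxy => ?_) e
          show Sym2.map Subtype.val s(x, y) ∈ G'.edgeSet
          rw [Sym2.map_pair_eq]
          rw [SimpleGraph.mem_edgeSet] at hxy ⊢
          rw [hG'def, SimpleGraph.deleteEdges_adj]
          refine ⟨hxy, ?_⟩
          rw [Set.mem_singleton_iff]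
          intro hmem
          rcases Sym2.eq_iff.mp hmem with ⟨_, h2⟩ | ⟨h1, _⟩
          · exact y.2 h2
          · exact x.2 h1
        · intro e1 e2 h12
          exact Subtype.ext (Sym2.map.injective Subtype.val_injective
            (congrArg Subtype.val h12))
      -- apply IH
      have IH1 := ih V G' heG' (acyclic_of_le (SimpleGraph.deleteEdges_le _) hG)
      have IH2 := ih {x : V // x ≠ v} H heH (acyclic_comap hG)
      -- component counts
      set c := Nat.card G.ConnectedComponent with hcdef
      haveI : Nonempty G.ConnectedComponent := ⟨G.connectedComponentMk a⟩
      have hc1 : 1 ≤ c := Nat.card_pos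
      have hccH : Nat.card H.ConnectedComponent = c := cc_card_leaf huv hleaf
      have hHG' : G'.comap (Subtype.val : {x : V // x ≠ v} → V) = H := by
        ext x y
        rw [hG'def, hHdef]
        simp only [SimpleGraph.comap_adj, SimpleGraph.deleteEdges_adj, Set.mem_singleton_iff]
        constructor
        · rintro ⟨h, _⟩; exact h
        · intro h
          refine ⟨h, ?_⟩
          intro hmem
          rcases Sym2.eq_iff.mp hmem with ⟨_, h2⟩ | ⟨h1, _⟩
          · exact y.2 h2
          · exact x.2 h1
      have hccG' : Nat.card G'.ConnectedComponent = c + 1 := by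
        rw [cc_card_isolated (G'_isolated huv hleaf), hHG', hccH]
      -- vertex count
      have hW : Fintype.card {x : V // x ≠ v} = Fintype.card V - 1 := by
        have h := Fintype.card_subtype_compl (fun x : V => x = v)
        rw [Fintype.card_subtype_eq] at h
        exact h
      -- split the count for G'
      have hsplit := card_split
        (fun s : Setoid V => ∀ a b, G'.Adj a b → ¬ s.r a b) (fun s => s.r u v)
      have hcontract : Nat.card {s : Setoid V //
            (∀ a b, G'.Adj a b → ¬ s.r a b) ∧ s.r u v}
          = bellF (Fintype.card V - 1) c := by
        rw [Nat.card_congr (contractEquiv huv hleaf), IH2, hW, hccH]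
      have hGcase : Nat.card {s : Setoid V //
            (∀ a b, G'.Adj a b → ¬ s.r a b) ∧ ¬ s.r u v}
          = Nat.card {s : Setoid V // ∀ a b, G.Adj a b → ¬ s.r a b} := by
        apply Nat.card_congr
        apply Equiv.subtypeEquivRight
        intro s
        constructor
        · rintro ⟨h1, h2⟩ a' b' hadj hr
          by_cases hmem : s(a', b') = s(u, v)
          · rcases Sym2.eq_iff.mp hmem with ⟨rfl, rfl⟩ | ⟨rfl, rfl⟩
            · exact h2 hr
            · exact h2 (s.symm hr)
          · exact h1 a' b' (by
              rw [hG'def, SimpleGraph.deleteEdges_adj]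
              exact ⟨hadj, by simpa using hmem⟩) hr
        · intro h
          exact ⟨fun a' b' hadj => h a' b' ((SimpleGraph.deleteEdges_adj).mp hadj).1,
            h u v huv⟩
      rw [IH1, hccG', hcontract, hGcase] at hsplit
      rw [bellF_pascal _ _ hc1] at hsplit
      omega

theorem forest_bell_number {V : Type} [Fintype V] [DecidableEq V]
    (G : SimpleGraph V) (hG : G.IsAcyclic) (n c : ℕ)
    (hn : Fintype.card V = n) (hc : Nat.card G.ConnectedComponent = c)
    (hc1 : 1 ≤ c) (hcn : c ≤ n) :
    ∑ k ∈ Finset.range (n + 1), graphStirling G k =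
      ∑ i ∈ Finset.range c, Nat.choose (c - 1) i * bell (n - 1 - i) := by
  subst hn
  subst hc
  haveI : Nonempty V := Fintype.card_pos_iff.mp (by omega)
  rw [sum_graphStirling_eq G]
  exact main_count (Nat.card G.edgeSet) V G le_rfl hG
end

section
/- For the cycle C_n with n ≥ 4, the number of partitions into exactly 4 independent sets is S(C_n, 4) = (3^n - 4·2^n + (-1)^n + 6)/24. -/
open Finset SimpleGraph Polynomial

private def pq (x : ℕ) : ℕ → ℕ × ℕ
  | 0 => (1, 0)
  | n + 1 => ((x - 1) * (pq x n).2, (pq x n).1 + (x - 2) * (pq x n).2)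

private lemma pq_closed (x : ℕ) (hx : 2 ≤ x) (n : ℕ) :
    ((x : ℚ) * (pq x n).1 = ((x : ℚ) - 1) ^ n + (-1) ^ n * ((x : ℚ) - 1)) ∧
    ((x : ℚ) * (pq x n).2 = ((x : ℚ) - 1) ^ n - (-1) ^ n) := by
  have h1 : ((x - 1 : ℕ) : ℚ) = (x : ℚ) - 1 := by
    push_cast [Nat.cast_sub (by omega : 1 ≤ x)]; ring
  have h2 : ((x - 2 : ℕ) : ℚ) = (x : ℚ) - 2 := by
    push_cast [Nat.cast_sub hx]; ring
  induction n with
  | zero => simp [pq]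
  | succ n ih =>
    obtain ⟨hp, hq⟩ := ih
    constructor
    · show (x : ℚ) * ((x - 1 : ℕ) * (pq x n).2 : ℕ) = _
      push_cast [h1]
      linear_combination ((x:ℚ)-1) * hq
    · show (x : ℚ) * (((pq x n).1 + (x - 2 : ℕ) * (pq x n).2 : ℕ) : ℚ) = _
      push_cast [h2]
      linear_combination hp + ((x:ℚ)-2) * hq


private def PathP {x n : ℕ} (f : Fin (n + 1) → Fin x) : Prop :=
  ∀ i : Fin n, f i.castSucc ≠ f i.succ

private lemma nat_card_sigma {ι : Type*} [Fintype ι] {β : ι → Type*} [∀ i, Finite (β i)] :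
    Nat.card (Σ i, β i) = ∑ i, Nat.card (β i) := by
  letI : ∀ i, Fintype (β i) := fun i => Fintype.ofFinite _
  simp [Nat.card_eq_fintype_card]

private lemma path_card (x : ℕ) (n : ℕ) (a b : Fin x) :
    Nat.card {f : Fin (n + 1) → Fin x // PathP f ∧ f 0 = a ∧ f (Fin.last n) = b} =
      if a = b then (pq x n).1 else (pq x n).2 := by
  induction n generalizing b with
  | zero =>
    have hl0 : (Fin.last 0) = (0 : Fin 1) := rfl
    rcases eq_or_ne a b with rfl | h
    · rw [if_pos rfl]
      have h1 : Nat.card {f : Fin (0 + 1) → Fin x // PathP f ∧ f 0 = a ∧ f (Fin.last 0) = a} = 1 := by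
        rw [Nat.card_eq_one_iff_unique]
        constructor
        · constructor
          rintro ⟨f, -, hf0, -⟩ ⟨g, -, hg0, -⟩
          apply Subtype.ext
          funext i
          rw [Fin.eq_zero i]
          show f 0 = g 0
          rw [hf0, hg0]
        · exact ⟨⟨fun _ => a, fun i => i.elim0, rfl, by rw [hl0]⟩⟩
      rw [h1]; simp [pq]
    · rw [if_neg h]
      haveI : IsEmpty {f : Fin (0 + 1) → Fin x // PathP f ∧ f 0 = a ∧ f (Fin.last 0) = b} := by
        constructor
        rintro ⟨f, -, hf0, hfl⟩
        rw [hl0, hf0] at hfl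
        exact h hfl
      rw [Nat.card_of_isEmpty]; simp [pq]
  | succ n ih =>
    classical
    have key : ∀ (g : Fin (n+1) → Fin x), PathP g → g (Fin.last n) ≠ b →
        PathP (Fin.snoc g b : Fin (n+2) → Fin x) := by
      intro g hg hgl i
      induction i using Fin.lastCases with
      | last =>
        rw [Fin.succ_last, Fin.snoc_last, Fin.snoc_castSucc]
        exact hgl
      | cast j =>
        rw [Fin.succ_castSucc, Fin.snoc_castSucc, Fin.snoc_castSucc]
        exact hg j
    let F : (Σ c : {c : Fin x // c ≠ b},
          {g : Fin (n+1) → Fin x // PathP g ∧ g 0 = a ∧ g (Fin.last n) = c.1}) →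
        {f : Fin (n + 2) → Fin x // PathP f ∧ f 0 = a ∧ f (Fin.last (n + 1)) = b} :=
      fun p => ⟨Fin.snoc p.2.1 b,
        key p.2.1 p.2.2.1 (by rw [p.2.2.2.2]; exact p.1.2),
        by show Fin.snoc (α := fun _ => Fin x) p.2.1 b (Fin.castSucc 0) = a; rw [Fin.snoc_castSucc]; exact p.2.2.2.1,
        Fin.snoc_last _ _⟩
    have Finj : Function.Injective F := by
      rintro ⟨⟨c, hc⟩, ⟨g, hg⟩⟩ ⟨⟨c', hc'⟩, ⟨g', hg'⟩⟩ h
      have hsn : (Fin.snoc g b : Fin (n+2) → Fin x) = Fin.snoc g' b :=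
        congrArg Subtype.val h
      have hgg : g = g' := by
        funext i
        have := congrFun hsn i.castSucc
        rwa [Fin.snoc_castSucc, Fin.snoc_castSucc] at this
      subst hgg
      have hcc : c = c' := hg.2.2.symm.trans hg'.2.2
      subst hcc
      rfl
    have Fsurj : Function.Surjective F := by
      rintro ⟨f, hf, h0, hl⟩
      refine ⟨⟨⟨f (Fin.castSucc (Fin.last n)), ?_⟩, ⟨f ∘ Fin.castSucc, ?_, ?_, rfl⟩⟩, ?_⟩
      · have := hf (Fin.last n)
        rwa [Fin.succ_last, hl] at this
      · intro i
        show f (Fin.castSucc i.castSucc) ≠ f (Fin.castSucc i.succ)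
        have := hf i.castSucc
        rwa [Fin.succ_castSucc] at this
      · show f (Fin.castSucc 0) = a
        rwa [Fin.castSucc_zero]
      · apply Subtype.ext
        show (Fin.snoc (f ∘ Fin.castSucc) b : Fin (n+2) → Fin x) = f
        funext i
        induction i using Fin.lastCases with
        | last => rw [Fin.snoc_last, hl]
        | cast j => rw [Fin.snoc_castSucc]; rfl
    rw [← Nat.card_congr (Equiv.ofBijective F ⟨Finj, Fsurj⟩), nat_card_sigma]
    have hterm : ∀ c : {c : Fin x // c ≠ b},
        Nat.card {g : Fin (n+1) → Fin x // PathP g ∧ g 0 = a ∧ g (Fin.last n) = c.1} =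
          if a = c.1 then (pq x n).1 else (pq x n).2 := fun c => ih c.1
    rw [Finset.sum_congr rfl fun c _ => hterm c]
    rcases eq_or_ne a b with rfl | hab
    · rw [if_pos rfl]
      have h2 : ∀ c : {c : Fin x // c ≠ a},
          (if a = c.1 then (pq x n).1 else (pq x n).2) = (pq x n).2 := by
        rintro ⟨c, hc⟩
        exact if_neg (fun h => hc h.symm)
      rw [Finset.sum_congr rfl fun c _ => h2 c, Finset.sum_const, smul_eq_mul, Finset.card_univ]
      have hcard : Fintype.card {c : Fin x // c ≠ a} = x - 1 := by
        simp [Fintype.card_subtype_compl]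
      rw [hcard]
      simp [pq]
    · rw [if_neg hab]
      rw [← Finset.sum_subtype (Finset.univ.filter (· ≠ b)) (by simp)
        (fun c => if a = c then (pq x n).1 else (pq x n).2)]
      have ha : a ∈ Finset.univ.filter (· ≠ b) := by simp [hab]
      rw [← Finset.sum_erase_add _ _ ha, if_pos rfl]
      have h3 : ∀ c ∈ (Finset.univ.filter (· ≠ b)).erase a,
          (if a = c then (pq x n).1 else (pq x n).2) = (pq x n).2 := by
        intro c hc
        exact if_neg (fun h => (Finset.ne_of_mem_erase hc) h.symm)
      rw [Finset.sum_congr rfl h3, Finset.sum_const, smul_eq_mul]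
      have hcard : ((Finset.univ.filter (· ≠ b)).erase a).card = x - 2 := by
        rw [Finset.card_erase_of_mem ha]
        have : (Finset.univ.filter (· ≠ b)).card = x - 1 := by
          simp [Finset.filter_ne', Finset.card_erase_of_mem]
        omega
      rw [hcard]
      simp [pq]
      omega


private lemma nat_card_sigma' {ι : Type} [Fintype ι] {β : ι → Type} [∀ i, Finite (β i)] :
    Nat.card (Σ i, β i) = ∑ i, Nat.card (β i) := by
  letI : ∀ i, Fintype (β i) := fun i => Fintype.ofFinite _
  simp [Nat.card_eq_fintype_card]

private lemma parts_eq_image_part {V : Type} [DecidableEq V] {s : Finset V}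
    (P : Finpartition s) : P.parts = s.image P.part := by
  ext p
  constructor
  · intro hp
    obtain ⟨a, ha⟩ := P.nonempty_of_mem_parts hp
    exact Finset.mem_image.mpr ⟨a, P.le hp ha, P.part_eq_of_mem hp ha⟩
  · intro hp
    obtain ⟨a, ha, rfl⟩ := Finset.mem_image.mp hp
    exact P.part_mem.2 ha

private lemma chromatic_eq_sum {V : Type} [Fintype V] [DecidableEq V] (G : SimpleGraph V)
    (x : ℕ) :
    chromaticCount G x =
      ∑ k ∈ Finset.range (Fintype.card V + 1), graphStirling G k * x.descFactorial k := by
  classical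
  set Indep : Finpartition (Finset.univ : Finset V) → Prop :=
    fun P => ∀ p ∈ P.parts, ∀ u ∈ p, ∀ v ∈ p, ¬ G.Adj u v with hIndepDef
  let Ψ : (Σ P : {P : Finpartition (Finset.univ : Finset V) // Indep P},
        ({p : Finset V // p ∈ P.1.parts} ↪ Fin x)) →
      {f : V → Fin x // ∀ u v, G.Adj u v → f u ≠ f v} :=
    fun q => ⟨fun v => q.2 ⟨q.1.1.part v, q.1.1.part_mem.2 (Finset.mem_univ v)⟩, by
      intro u v huv h
      have hpq : q.1.1.part u = q.1.1.part v := Subtype.ext_iff.mp (q.2.injective h)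
      have hu : u ∈ q.1.1.part v := hpq ▸ q.1.1.mem_part (Finset.mem_univ u)
      exact q.1.2 _ (q.1.1.part_mem.2 (Finset.mem_univ v)) u hu v
        (q.1.1.mem_part (Finset.mem_univ v)) huv⟩
  have Ψinj : Function.Injective Ψ := by
    rintro ⟨⟨P, hP⟩, ι⟩ ⟨⟨Q, hQ⟩, κ⟩ h
    have hfv : ∀ v : V, ι ⟨P.part v, P.part_mem.2 (Finset.mem_univ v)⟩ =
        κ ⟨Q.part v, Q.part_mem.2 (Finset.mem_univ v)⟩ :=
      fun v => congrFun (congrArg Subtype.val h) v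
    have hpart : ∀ v, P.part v = Q.part v := by
      intro v
      ext u
      rw [P.mem_part_iff_part_eq_part (Finset.mem_univ u) (Finset.mem_univ v),
        Q.mem_part_iff_part_eq_part (Finset.mem_univ u) (Finset.mem_univ v)]
      constructor
      · intro h'
        have h2 : κ ⟨Q.part u, Q.part_mem.2 (Finset.mem_univ u)⟩ =
            κ ⟨Q.part v, Q.part_mem.2 (Finset.mem_univ v)⟩ := by
          rw [← hfv u, ← hfv v]
          congr 1
          exact Subtype.ext h'
        exact Subtype.ext_iff.mp (κ.injective h2)
      · intro h'
        have h2 : ι ⟨P.part u, P.part_mem.2 (Finset.mem_univ u)⟩ =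
            ι ⟨P.part v, P.part_mem.2 (Finset.mem_univ v)⟩ := by
          rw [hfv u, hfv v]
          congr 1
          exact Subtype.ext h'
        exact Subtype.ext_iff.mp (ι.injective h2)
    have hPQ : P = Q := by
      apply Finpartition.ext
      rw [parts_eq_image_part, parts_eq_image_part]
      exact Finset.image_congr fun v _ => hpart v
    subst hPQ
    have hικ : ι = κ := by
      apply DFunLike.ext
      rintro ⟨p, hp⟩
      obtain ⟨a, ha⟩ := P.nonempty_of_mem_parts hp
      have h1 : P.part a = p := P.part_eq_of_mem hp ha
      have h2 : (⟨p, hp⟩ : {p : Finset V // p ∈ P.parts}) =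
          ⟨P.part a, P.part_mem.2 (Finset.mem_univ a)⟩ := Subtype.ext h1.symm
      rw [h2]
      exact hfv a
    subst hικ
    rfl
  have Ψsurj : Function.Surjective Ψ := by
    rintro ⟨f, hf⟩
    set P := Finpartition.ofSetoid (Setoid.ker f) with hPdef
    have hmem : ∀ a b : V, b ∈ P.part a ↔ f a = f b := by
      intro a b
      rw [hPdef, Finpartition.mem_part_ofSetoid_iff_rel]
      exact Setoid.ker_def
    have hInd : Indep P := by
      intro p hp u hu v hv hadj
      have h1 : P.part u = p := P.part_eq_of_mem hp hu
      exact hf u v hadj ((hmem u v).mp (h1 ▸ hv))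
    have hrep : ∀ p : {p : Finset V // p ∈ P.parts},
        (P.nonempty_of_mem_parts p.2).choose ∈ p.1 :=
      fun p => (P.nonempty_of_mem_parts p.2).choose_spec
    let ι : {p : Finset V // p ∈ P.parts} ↪ Fin x :=
      ⟨fun p => f (P.nonempty_of_mem_parts p.2).choose, by
        intro p q hfeq
        apply Subtype.ext
        have h1 : P.part (P.nonempty_of_mem_parts p.2).choose = p.1 :=
          P.part_eq_of_mem p.2 (hrep p)
        have h2 : P.part (P.nonempty_of_mem_parts q.2).choose = q.1 :=
          P.part_eq_of_mem q.2 (hrep q)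
        rw [← h1, ← h2]
        have h3 : (P.nonempty_of_mem_parts q.2).choose ∈
            P.part (P.nonempty_of_mem_parts p.2).choose := (hmem _ _).mpr hfeq
        rw [P.mem_part_iff_part_eq_part (Finset.mem_univ _) (Finset.mem_univ _)] at h3
        exact h3.symm⟩
    refine ⟨⟨⟨P, hInd⟩, ι⟩, ?_⟩
    apply Subtype.ext
    funext v
    exact ((hmem v _).mp (hrep ⟨P.part v, P.part_mem.2 (Finset.mem_univ v)⟩)).symm
  rw [chromaticCount, ← Nat.card_congr (Equiv.ofBijective Ψ ⟨Ψinj, Ψsurj⟩), nat_card_sigma']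
  have hterm : ∀ P : {P : Finpartition (Finset.univ : Finset V) // Indep P},
      Nat.card ({p : Finset V // p ∈ P.1.parts} ↪ Fin x) = x.descFactorial P.1.parts.card := by
    intro P
    rw [Nat.card_eq_fintype_card, Fintype.card_embedding_eq, Fintype.card_fin, Fintype.card_coe]
  rw [Finset.sum_congr rfl fun P _ => hterm P]
  rw [← Finset.sum_fiberwise_of_maps_to
      (g := fun P : {P : Finpartition (Finset.univ : Finset V) // Indep P} => P.1.parts.card)
      (t := Finset.range (Fintype.card V + 1))
      (fun P _ => Finset.mem_range.mpr (by
        have h := P.1.card_parts_le_card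
        simp only [Finset.card_univ] at h
        exact Nat.lt_succ_of_le h))]
  apply Finset.sum_congr rfl
  intro k hk
  have hconst : ∀ P ∈ Finset.univ.filter
      (fun P : {P : Finpartition (Finset.univ : Finset V) // Indep P} => P.1.parts.card = k),
      x.descFactorial P.1.parts.card = x.descFactorial k := by
    intro P hP
    rw [(Finset.mem_filter.mp hP).2]
  rw [Finset.sum_congr rfl hconst, Finset.sum_const, smul_eq_mul]
  congr 1
  have e : {P : Finpartition (Finset.univ : Finset V) // P.parts.card = k ∧ Indep P} ≃
      {Q : {P : Finpartition (Finset.univ : Finset V) // Indep P} // Q.1.parts.card = k} :=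
    { toFun := fun P => ⟨⟨P.1, P.2.2⟩, P.2.1⟩
      invFun := fun Q => ⟨Q.1.1, Q.2, Q.1.2⟩
      left_inv := fun P => rfl
      right_inv := fun Q => rfl }
  rw [graphStirling, Nat.card_congr e, Nat.card_eq_fintype_card, Fintype.card_subtype]


private lemma cycle_count (x m : ℕ) (hx : 2 ≤ x) :
    (Nat.card {f : Fin (m + 1) → Fin x // ∀ i, f i ≠ f (i + 1)} : ℚ) =
      ((x : ℚ) - 1) ^ (m + 1) + (-1) ^ (m + 1) * ((x : ℚ) - 1) := by
  have hlast1 : (Fin.last m : Fin (m + 1)) + 1 = 0 := by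
    ext
    simp [Fin.add_def]
  have key : ∀ (g : Fin (m + 2) → Fin x), PathP g → g 0 = g (Fin.last (m + 1)) →
      ∀ i : Fin (m + 1), (g ∘ Fin.castSucc) i ≠ (g ∘ Fin.castSucc) (i + 1) := by
    intro g hg hga i
    induction i using Fin.lastCases with
    | last =>
      show g (Fin.castSucc (Fin.last m)) ≠ g (Fin.castSucc (Fin.last m + 1))
      rw [hlast1, Fin.castSucc_zero, hga, ← Fin.succ_last]
      exact hg (Fin.last m)
    | cast j =>
      show g (Fin.castSucc (Fin.castSucc j)) ≠ g (Fin.castSucc (Fin.castSucc j + 1))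
      rw [Fin.coeSucc_eq_succ, ← Fin.succ_castSucc]
      exact hg (Fin.castSucc j)
  let G : (Σ a : Fin x, {g : Fin (m + 2) → Fin x //
        PathP g ∧ g 0 = a ∧ g (Fin.last (m + 1)) = a}) →
      {f : Fin (m + 1) → Fin x // ∀ i, f i ≠ f (i + 1)} :=
    fun p => ⟨p.2.1 ∘ Fin.castSucc, key p.2.1 p.2.2.1 (p.2.2.2.1.trans p.2.2.2.2.symm)⟩
  have Ginj : Function.Injective G := by
    rintro ⟨a, ⟨g, hg, hg0, hgl⟩⟩ ⟨a', ⟨g', hg', hg0', hgl'⟩⟩ h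
    have hcomp : g ∘ Fin.castSucc = g' ∘ Fin.castSucc := congrArg Subtype.val h
    have haa : a = a' := by
      have := congrFun hcomp 0
      simp only [Function.comp_apply, Fin.castSucc_zero] at this
      rw [hg0, hg0'] at this
      exact this
    subst haa
    have hgg : g = g' := by
      funext i
      induction i using Fin.lastCases with
      | last => rw [hgl, hgl']
      | cast j => exact congrFun hcomp j
    subst hgg
    rfl
  have Gsurj : Function.Surjective G := by
    rintro ⟨f, hf⟩
    refine ⟨⟨f 0, ⟨Fin.snoc f (f 0), ?_, ?_, Fin.snoc_last _ _⟩⟩, ?_⟩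
    · intro i
      induction i using Fin.lastCases with
      | last =>
        rw [Fin.succ_last, Fin.snoc_last, Fin.snoc_castSucc]
        have := hf (Fin.last m)
        rwa [hlast1] at this
      | cast j =>
        rw [Fin.succ_castSucc, Fin.snoc_castSucc, Fin.snoc_castSucc]
        have := hf (Fin.castSucc j)
        rwa [Fin.coeSucc_eq_succ] at this
    · show Fin.snoc (α := fun _ => Fin x) f (f 0) (Fin.castSucc 0) = f 0; rw [Fin.snoc_castSucc]
    · apply Subtype.ext
      show (Fin.snoc f (f 0) : Fin (m + 2) → Fin x) ∘ Fin.castSucc = f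
      funext i
      simp [Fin.snoc_castSucc]
  rw [← Nat.card_congr (Equiv.ofBijective G ⟨Ginj, Gsurj⟩), nat_card_sigma']
  have hterm : ∀ a : Fin x, Nat.card {g : Fin (m + 2) → Fin x //
      PathP g ∧ g 0 = a ∧ g (Fin.last (m + 1)) = a} = (pq x (m + 1)).1 := by
    intro a
    rw [path_card x (m + 1) a a, if_pos rfl]
  rw [Finset.sum_congr rfl fun a _ => hterm a, Finset.sum_const, smul_eq_mul,
    Finset.card_univ, Fintype.card_fin]
  push_cast
  exact (pq_closed x hx (m + 1)).1


private lemma chromaticCount_cycle (m x : ℕ) :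
    chromaticCount (SimpleGraph.cycleGraph (m + 2)) x =
      Nat.card {f : Fin (m + 2) → Fin x // ∀ i, f i ≠ f (i + 1)} := by
  rw [chromaticCount]
  apply Nat.card_congr
  apply Equiv.subtypeEquivRight
  intro f
  constructor
  · intro hf i
    apply hf
    rw [SimpleGraph.cycleGraph_adj]
    right
    rw [add_sub_cancel_left]
  · intro hf u v hadj
    rw [SimpleGraph.cycleGraph_adj] at hadj
    rcases hadj with h | h
    · rw [sub_eq_iff_eq_add] at h
      rw [h, add_comm]
      exact (hf v).symm
    · rw [sub_eq_iff_eq_add] at h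
      rw [h, add_comm]
      exact hf u

private lemma cycle_count_one (m : ℕ) :
    Nat.card {f : Fin (m + 1) → Fin 1 // ∀ i, f i ≠ f (i + 1)} = 0 := by
  haveI : IsEmpty {f : Fin (m + 1) → Fin 1 // ∀ i, f i ≠ f (i + 1)} :=
    ⟨fun ⟨f, hf⟩ => hf 0 (Subsingleton.elim _ _)⟩
  exact Nat.card_of_isEmpty

private lemma graphStirling_zero {V : Type} [Fintype V] [DecidableEq V] [Nonempty V]
    (G : SimpleGraph V) : graphStirling G 0 = 0 := by
  rw [graphStirling]
  haveI : IsEmpty {P : Finpartition (Finset.univ : Finset V) //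
      P.parts.card = 0 ∧ ∀ p ∈ P.parts, ∀ u ∈ p, ∀ v ∈ p, ¬ G.Adj u v} := by
    constructor
    rintro ⟨P, hP, -⟩
    rw [Finset.card_eq_zero] at hP
    have h : (Finset.univ : Finset V) = ⊥ := Finpartition.parts_eq_empty_iff.mp hP
    exact Finset.univ_nonempty.ne_empty h
  exact Nat.card_of_isEmpty

theorem cycle_graphStirling_four (n : ℕ) (hn : 4 ≤ n) :
    (graphStirling (SimpleGraph.cycleGraph n) 4 : ℚ) =
      ((3 : ℚ) ^ n - 4 * (2 : ℚ) ^ n + (-1 : ℚ) ^ n + 6) / 24 := by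
  obtain ⟨m, rfl⟩ : ∃ m, n = m + 2 := ⟨n - 2, by omega⟩
  have hchrom : ∀ x : ℕ, chromaticCount (SimpleGraph.cycleGraph (m + 2)) x =
      ∑ k ∈ Finset.range (m + 2 + 1),
        graphStirling (SimpleGraph.cycleGraph (m + 2)) k * x.descFactorial k := by
    intro x
    have h := chromatic_eq_sum (SimpleGraph.cycleGraph (m + 2)) x
    rwa [Fintype.card_fin] at h
  have htrunc : ∀ x : ℕ, x ≤ 4 →
      chromaticCount (SimpleGraph.cycleGraph (m + 2)) x =
        ∑ k ∈ Finset.range 5,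
          graphStirling (SimpleGraph.cycleGraph (m + 2)) k * x.descFactorial k := by
    intro x hx
    rw [hchrom x]
    symm
    apply Finset.sum_subset
    · intro k hk
      simp only [Finset.mem_range] at *
      omega
    · intro k _ hk2
      simp only [Finset.mem_range, not_lt] at hk2
      rw [Nat.descFactorial_eq_zero_iff_lt.mpr (by omega), Nat.mul_zero]
  have hval : ∀ x : ℕ, 2 ≤ x → (chromaticCount (SimpleGraph.cycleGraph (m + 2)) x : ℚ) =
      ((x : ℚ) - 1) ^ (m + 2) + (-1) ^ (m + 2) * ((x : ℚ) - 1) := by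
    intro x hx
    rw [chromaticCount_cycle m x]
    exact cycle_count x (m + 1) hx
  have hval1 : (chromaticCount (SimpleGraph.cycleGraph (m + 2)) 1 : ℚ) = 0 := by
    rw [chromaticCount_cycle m 1, cycle_count_one (m + 1)]
    norm_num
  have hv2 := hval 2 (by norm_num)
  have hv3 := hval 3 (by norm_num)
  have hv4 := hval 4 (by norm_num)
  norm_num at hv2 hv3 hv4
  have e1 := htrunc 1 (by norm_num)
  have e2 := htrunc 2 (by norm_num)
  have e3 := htrunc 3 (by norm_num)
  have e4 := htrunc 4 (by norm_num)
  simp only [Finset.sum_range_succ, Finset.sum_range_zero] at e1 e2 e3 e4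
  norm_num [Nat.descFactorial] at e1 e2 e3 e4
  set S : ℕ → ℕ := fun k => graphStirling (SimpleGraph.cycleGraph (m + 2)) k with hSdef
  have hS0 : S 0 = 0 := graphStirling_zero _
  have q1 : (0 : ℚ) = S 0 + S 1 := by
    rw [← hval1]
    exact_mod_cast congrArg (fun t : ℕ => (t : ℚ)) e1
  have q2 : (1 : ℚ) + (-1) ^ (m + 2) = S 0 + 2 * S 1 + 2 * S 2 := by
    rw [← hv2]
    have := congrArg (fun t : ℕ => (t : ℚ)) e2
    push_cast at this ⊢
    linarith [this]
  have q3 : (2 : ℚ) ^ (m + 2) + (-1) ^ (m + 2) * 2 = S 0 + 3 * S 1 + 6 * S 2 + 6 * S 3 := by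
    rw [← hv3]
    have := congrArg (fun t : ℕ => (t : ℚ)) e3
    push_cast at this ⊢
    linarith [this]
  have q4 : (3 : ℚ) ^ (m + 2) + (-1) ^ (m + 2) * 3 =
      S 0 + 4 * S 1 + 12 * S 2 + 24 * S 3 + 24 * S 4 := by
    rw [← hv4]
    have := congrArg (fun t : ℕ => (t : ℚ)) e4
    push_cast at this ⊢
    linarith [this]
  have hS0Q : (S 0 : ℚ) = 0 := by rw [hS0]; norm_num
  show (S 4 : ℚ) = ((3 : ℚ) ^ (m + 2) - 4 * (2 : ℚ) ^ (m + 2) + (-1 : ℚ) ^ (m + 2) + 6) / 24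
  linarith [q1, q2, q3, q4, hS0Q]
end

section
/- If P(x) = Σ_{k=2}^{n} a_k x^k with n ≥ 3, a_k > 0 for 3 ≤ k ≤ n, a_2 ≥ 0, and the coefficient sequence is ultra log-concave (i.e., (a_k/C(n,k))^2 ≥ (a_{k-1}/C(n,k-1))(a_{k+1}/C(n,k+1)) for all k), then Q(x) = x(x + xD)(P(x)/x) has coefficient sequence that is ultra log-concave with respect to n+1, with strict inequalities at all indices k ≥ 3 (and also k = 2 if a_2 > 0). -/
open Finset SimpleGraph Polynomial

lemma key_ineq (k p w x y z : ℝ) (hk : 3 ≤ k) (hp : 1 ≤ p)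
    (hw : 0 ≤ w) (hx : 0 ≤ x) (hy : 0 < y) (hz : 0 ≤ z)
    (h1 : w * y ≤ x ^ 2) (h2 : x * z ≤ y ^ 2) :
    ((k-1)*w + (k-2)*(p+1)*x) * ((k+1)*y + k*(p-1)*z) < (k*x + (k-1)*p*y)^2 := by
  have hwz : w * z ≤ x * y := by
    rcases eq_or_lt_of_le hx with hx0 | hx0
    · have hw0 : w = 0 := le_antisymm (by nlinarith) hw
      rw [hw0, zero_mul]; exact mul_nonneg hx hy.le
    · have hxy : 0 < x * y := mul_pos hx0 hy
      have hh : (w*z) * (x*y) ≤ (x*y) * (x*y) := by nlinarith [mul_le_mul h1 h2 (mul_nonneg hx hz) (sq_nonneg x)]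
      exact le_of_mul_le_mul_right hh hxy
  have t1 : 0 ≤ (k^2 - 1) * (x^2 - w*y) := mul_nonneg (by nlinarith [sq_nonneg (k-3)]) (by linarith)
  have t2 : 0 ≤ (k*(k-1)*(p-1)) * (x*y - w*z) :=
    mul_nonneg (mul_nonneg (mul_nonneg (by linarith) (by linarith)) (by linarith)) (by linarith)
  have t3 : 0 ≤ (k*(k-2)*(p^2-1)) * (y^2 - x*z) :=
    mul_nonneg (mul_nonneg (mul_nonneg (by linarith) (by linarith)) (by nlinarith [sq_nonneg (p-1)])) (by linarith)
  have t4 : 0 ≤ (p+1) * (x*y) := mul_nonneg (by linarith) (mul_nonneg hx hy.le)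
  have t5 : 0 < ((k-1)^2 + p^2 - 1) * y^2 :=
    mul_pos (by nlinarith [sq_nonneg (k-3), sq_nonneg p]) (pow_pos hy 2)
  nlinarith [t1, t2, t3, t4, t5, sq_nonneg x]

lemma choose_id (m j : ℕ) (hj1 : 1 ≤ j) (hjm : j ≤ m + 1) :
    ((m:ℝ) - j + 1) * (m.choose (j-1) : ℝ) = (j:ℝ) * (m.choose j : ℝ) := by
  have h0 := Nat.choose_succ_right_eq m (j-1)
  rw [show j-1+1 = j from by omega] at h0
  rcases le_or_gt j m with hjm' | hgt
  · rw [show m - (j-1) = m - j + 1 from by omega] at h0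
    have h1 : (m.choose j : ℝ) * j = (m.choose (j-1) : ℝ) * (((m - j : ℕ) : ℝ) + 1) := by
      exact_mod_cast h0
    rw [Nat.cast_sub hjm'] at h1
    linear_combination -h1
  · have hjm2 : j = m + 1 := by omega
    rw [hjm2, Nat.add_sub_cancel, Nat.choose_succ_self]
    push_cast; ring

lemma main_aux (K P A B N D Cm Ck Cp w x y z bm bk bp : ℝ)
    (hK : 3 ≤ K) (hP : 1 ≤ P)
    (hN : 0 < N) (hCm : 0 < Cm) (hCk : 0 < Ck) (hCp : 0 < Cp)
    (hw : 0 ≤ w) (hx : 0 ≤ x) (hy : 0 < y) (hz : 0 ≤ z)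
    (hbm : bm = w*A + (K-2)*(x*B)) (hbk : bk = x*B + (K-1)*(y*N)) (hbp : bp = y*N + K*(z*D))
    (idA : (P+1)*A = (K-1)*B) (idB : P*B = K*N) (idD : (K+1)*D = (P-1)*N)
    (id1 : K*Ck = (P+1)*Cm) (id2 : (K+1)*Cp = P*Ck)
    (h1 : w*y ≤ x^2) (h2 : x*z ≤ y^2) :
    bm / Cm * (bp / Cp) < (bk / Ck)^2 := by
  have hUV := key_ineq K P w x y z hK hP hw hx hy hz h1 h2
  have e1 : P*bk = N*(K*x + (K-1)*P*y) := by rw [hbk]; linear_combination x*idB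
  have e2 : (P+1)*bm = B*((K-1)*w + (K-2)*(P+1)*x) := by rw [hbm]; linear_combination w*idA
  have e3 : (K+1)*bp = N*((K+1)*y + K*(P-1)*z) := by rw [hbp]; linear_combination K*z*idD
  have f1 : P^2*bk^2 = N^2*(K*x+(K-1)*P*y)^2 := by
    linear_combination (P*bk + N*(K*x+(K-1)*P*y))*e1
  have f2 : (K+1)*(P+1)*(Cm*Cp) = K*P*Ck^2 := by
    linear_combination (-(K+1)*Cp)*id1 + K*Ck*id2
  have f3 : (P+1)*(K+1)*(bm*bp)
      = B*((K-1)*w+(K-2)*(P+1)*x)*(N*((K+1)*y+K*(P-1)*z)) := by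
    linear_combination ((K+1)*bp)*e2 + (B*((K-1)*w+(K-2)*(P+1)*x))*e3
  have hK0 : (0:ℝ) < K := by linarith
  have hP0 : (0:ℝ) < P := by linarith
  have hM : (0:ℝ) < K*(K+1)*P^2*(P+1) :=
    mul_pos (mul_pos (mul_pos hK0 (by linarith)) (pow_pos hP0 2)) (by linarith)
  rw [div_mul_div_comm, div_pow, div_lt_div_iff₀ (mul_pos hCm hCp) (pow_pos hCk 2)]
  refine lt_of_mul_lt_mul_left ?_ hM.le
  have hpos : (0:ℝ) < (K^2*P*Ck^2*N^2) *
      ((K*x+(K-1)*P*y)^2 - ((K-1)*w+(K-2)*(P+1)*x)*((K+1)*y+K*(P-1)*z)) := by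
    apply mul_pos
    · exact mul_pos (mul_pos (mul_pos (pow_pos hK0 2) hP0) (pow_pos hCk 2)) (pow_pos hN 2)
    · linarith
  have E : (K*(K+1)*P^2*(P+1))*(bk^2*(Cm*Cp)) - (K*(K+1)*P^2*(P+1))*(bm*bp*Ck^2)
      = (K^2*P*Ck^2*N^2) *
      ((K*x+(K-1)*P*y)^2 - ((K-1)*w+(K-2)*(P+1)*x)*((K+1)*y+K*(P-1)*z)) := by
    linear_combination (K*(K+1)*(P+1)*Cm*Cp)*f1 + (K*N^2*(K*x+(K-1)*P*y)^2)*f2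
      - (K*P^2*Ck^2)*f3
      - (K*P*Ck^2*((K-1)*w+(K-2)*(P+1)*x)*N*((K+1)*y+K*(P-1)*z))*idB
  linarith [E, hpos]


theorem operator_preserves_ultra_log_concave (n : ℕ) (hn : 3 ≤ n) (a : ℕ → ℝ)
    (ha0 : ∀ k, k < 2 ∨ n < k → a k = 0)
    (hapos : ∀ k, 3 ≤ k → k ≤ n → 0 < a k) (ha2 : 0 ≤ a 2)
    (hulc : ∀ k, 1 ≤ k → k ≤ n - 1 →
      (a k / (Nat.choose n k : ℝ)) ^ 2 ≥
        (a (k - 1) / (Nat.choose n (k - 1) : ℝ)) * (a (k + 1) / (Nat.choose n (k + 1) : ℝ)))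
    (b : ℕ → ℝ)
    (hb : ∀ k, b k =
      if k = 2 then a 2
      else if 3 ≤ k ∧ k ≤ n then a (k - 1) + (k - 1 : ℝ) * a k
      else if k = n + 1 then a n
      else 0) :
    (∀ k, 1 ≤ k → k ≤ n →
      (b k / (Nat.choose (n + 1) k : ℝ)) ^ 2 ≥
        (b (k - 1) / (Nat.choose (n + 1) (k - 1) : ℝ)) *
          (b (k + 1) / (Nat.choose (n + 1) (k + 1) : ℝ)))
    ∧ (∀ k, 3 ≤ k → k ≤ n →
      (b k / (Nat.choose (n + 1) k : ℝ)) ^ 2 >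
        (b (k - 1) / (Nat.choose (n + 1) (k - 1) : ℝ)) *
          (b (k + 1) / (Nat.choose (n + 1) (k + 1) : ℝ)))
    ∧ (0 < a 2 →
      (b 2 / (Nat.choose (n + 1) 2 : ℝ)) ^ 2 >
        (b 1 / (Nat.choose (n + 1) 1 : ℝ)) * (b 3 / (Nat.choose (n + 1) 3 : ℝ))) := by
  have ha_nonneg : ∀ j, 0 ≤ a j := by
    intro j
    rcases lt_or_ge j 2 with h | h
    · rw [ha0 j (Or.inl h)]
    · rcases lt_or_ge n j with h2 | h2
      · rw [ha0 j (Or.inr h2)]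
      · by_cases hj : j = 2
        · rw [hj]; exact ha2
        · exact le_of_lt (hapos j (by omega) h2)
  have hb0 : b 0 = 0 := by
    have h1 : ¬((0:ℕ) = n + 1) := by omega
    rw [hb]; simp [h1]
  have hb1 : b 1 = 0 := by
    have h1 : ¬((1:ℕ) = n + 1) := by omega
    rw [hb]; simp [h1]; intro h; omega
  have hb2 : b 2 = a 2 := by rw [hb]; simp
  have main : ∀ k, 3 ≤ k → k ≤ n →
      (b k / (Nat.choose (n + 1) k : ℝ)) ^ 2 >
        (b (k - 1) / (Nat.choose (n + 1) (k - 1) : ℝ)) *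
          (b (k + 1) / (Nat.choose (n + 1) (k + 1) : ℝ)) := by
    intro k hk3 hkn
    have hA : (0:ℝ) < (n.choose (k-2) : ℝ) := by exact_mod_cast Nat.choose_pos (by omega)
    have hB : (0:ℝ) < (n.choose (k-1) : ℝ) := by exact_mod_cast Nat.choose_pos (by omega)
    have hN : (0:ℝ) < (n.choose k : ℝ) := by exact_mod_cast Nat.choose_pos (by omega)
    have hCm : (0:ℝ) < ((n+1).choose (k-1) : ℝ) := by exact_mod_cast Nat.choose_pos (by omega)
    have hCk : (0:ℝ) < ((n+1).choose k : ℝ) := by exact_mod_cast Nat.choose_pos (by omega)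
    have hCp : (0:ℝ) < ((n+1).choose (k+1) : ℝ) := by exact_mod_cast Nat.choose_pos (by omega)
    -- b formulas
    have hbk : b k = a (k-1) + ((k:ℝ) - 1) * a k := by
      rw [hb]; have h2 : k ≠ 2 := by omega
      rw [if_neg h2, if_pos (show 3 ≤ k ∧ k ≤ n from ⟨hk3, hkn⟩)]
    have hbm : b (k-1) = a (k-2) + ((k:ℝ) - 2) * a (k-1) := by
      rcases eq_or_lt_of_le hk3 with h3 | h4
      · rw [← h3]
        norm_num
        rw [hb2, ha0 1 (Or.inl (by norm_num))]
        ring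
      · rw [hb]
        have h2 : k - 1 ≠ 2 := by omega
        rw [if_neg h2, if_pos (show 3 ≤ k-1 ∧ k-1 ≤ n from ⟨by omega, by omega⟩)]
        rw [show k-1-1 = k-2 from by omega, Nat.cast_sub (by omega : 1 ≤ k)]
        push_cast; ring
    have hbp : b (k+1) = a k + (k:ℝ) * a (k+1) := by
      rcases eq_or_lt_of_le hkn with heq | hlt
      · rw [hb]
        have h2 : k+1 ≠ 2 := by omega
        have h3 : ¬(3 ≤ k+1 ∧ k+1 ≤ n) := by omega
        rw [if_neg h2, if_neg h3, if_pos (show k+1 = n+1 from by omega)]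
        rw [ha0 (k+1) (Or.inr (by omega)), ← heq]
        ring
      · rw [hb]
        have h2 : k+1 ≠ 2 := by omega
        rw [if_neg h2, if_pos (show 3 ≤ k+1 ∧ k+1 ≤ n from ⟨by omega, by omega⟩)]
        rw [show k+1-1 = k from by omega]
        push_cast; ring
    -- cast identities
    have idB : ((n:ℝ) - k + 1) * (n.choose (k-1) : ℝ) = (k:ℝ) * (n.choose k : ℝ) :=
      choose_id n k (by omega) (by omega)
    have idA : ((n:ℝ) - k + 1 + 1) * (n.choose (k-2) : ℝ) = ((k:ℝ) - 1) * (n.choose (k-1) : ℝ) := by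
      have h := choose_id n (k-1) (by omega) (by omega)
      rw [show k-1-1 = k-2 from by omega, Nat.cast_sub (by omega : 1 ≤ k)] at h
      push_cast at h
      linear_combination h
    have idD : ((k:ℝ) + 1) * (n.choose (k+1) : ℝ) = ((n:ℝ) - k + 1 - 1) * (n.choose k : ℝ) := by
      have h := choose_id n (k+1) (by omega) (by omega)
      rw [show k+1-1 = k from by omega] at h
      push_cast at h
      linear_combination -h
    have id1 : (k:ℝ) * ((n+1).choose k : ℝ) = ((n:ℝ) - k + 1 + 1) * ((n+1).choose (k-1) : ℝ) := by
      have h := choose_id (n+1) k (by omega) (by omega)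
      push_cast at h
      linear_combination -h
    have id2 : ((k:ℝ) + 1) * ((n+1).choose (k+1) : ℝ) = ((n:ℝ) - k + 1) * ((n+1).choose k : ℝ) := by
      have h := choose_id (n+1) (k+1) (by omega) (by omega)
      rw [show k+1-1 = k from by omega] at h
      push_cast at h
      linear_combination -h
    -- ULC in c-form
    have h1 := hulc (k-1) (by omega) (by omega)
    rw [show k-1-1 = k-2 from by omega, show k-1+1 = k from by omega] at h1
    have h2 : (a (k-1) / (n.choose (k-1) : ℝ)) * (a (k+1) / (n.choose (k+1) : ℝ))
        ≤ (a k / (n.choose k : ℝ))^2 := by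
      by_cases hkn' : k = n
      · rw [ha0 (k+1) (Or.inr (by omega)), zero_div, mul_zero]
        positivity
      · exact hulc k (by omega) (by omega)
    -- a = c * C facts
    have hap1 : a (k+1) = a (k+1) / (n.choose (k+1) : ℝ) * (n.choose (k+1) : ℝ) := by
      by_cases hkn' : k = n
      · rw [ha0 (k+1) (Or.inr (by omega))]; simp
      · have hD : (0:ℝ) < (n.choose (k+1) : ℝ) := by exact_mod_cast Nat.choose_pos (by omega)
        exact (div_mul_cancel₀ _ hD.ne').symm
    have hbm2 : b (k-1) = (a (k-2) / (n.choose (k-2) : ℝ)) * (n.choose (k-2) : ℝ)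
        + ((k:ℝ) - 2) * ((a (k-1) / (n.choose (k-1) : ℝ)) * (n.choose (k-1) : ℝ)) := by
      rw [div_mul_cancel₀ _ hA.ne', div_mul_cancel₀ _ hB.ne']; exact hbm
    have hbk2 : b k = (a (k-1) / (n.choose (k-1) : ℝ)) * (n.choose (k-1) : ℝ)
        + ((k:ℝ) - 1) * ((a k / (n.choose k : ℝ)) * (n.choose k : ℝ)) := by
      rw [div_mul_cancel₀ _ hB.ne', div_mul_cancel₀ _ hN.ne']; exact hbk
    have hbp2 : b (k+1) = (a k / (n.choose k : ℝ)) * (n.choose k : ℝ)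
        + (k:ℝ) * ((a (k+1) / (n.choose (k+1) : ℝ)) * (n.choose (k+1) : ℝ)) := by
      rw [div_mul_cancel₀ _ hN.ne', ← hap1]; exact hbp
    exact main_aux (k:ℝ) ((n:ℝ) - k + 1)
      (n.choose (k-2) : ℝ) (n.choose (k-1) : ℝ) (n.choose k : ℝ) (n.choose (k+1) : ℝ)
      ((n+1).choose (k-1) : ℝ) ((n+1).choose k : ℝ) ((n+1).choose (k+1) : ℝ)
      (a (k-2) / (n.choose (k-2) : ℝ)) (a (k-1) / (n.choose (k-1) : ℝ))
      (a k / (n.choose k : ℝ)) (a (k+1) / (n.choose (k+1) : ℝ))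
      (b (k-1)) (b k) (b (k+1))
      (by exact_mod_cast hk3)
      (by
        have hc : (k:ℝ) ≤ n := by exact_mod_cast hkn
        linarith)
      hN hCm hCk hCp
      (div_nonneg (ha_nonneg _) hA.le) (div_nonneg (ha_nonneg _) hB.le)
      (div_pos (hapos k hk3 hkn) hN) (div_nonneg (ha_nonneg _) (Nat.cast_nonneg _))
      hbm2 hbk2 hbp2 idA idB idD id1 id2 h1 h2
  refine ⟨?_, main, ?_⟩
  · intro k hk1 hkn
    rcases Nat.lt_or_ge k 3 with h | h
    · interval_cases k
      · simp [hb0, hb1]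
      · rw [show (2:ℕ)-1 = 1 from rfl, hb1, zero_div, zero_mul]
        positivity
    · exact le_of_lt (main k h hkn)
  · intro h2pos
    rw [hb1, hb2, zero_div, zero_mul]
    exact pow_pos (div_pos h2pos (by exact_mod_cast Nat.choose_pos (by omega))) 2
end
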